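/- arXiv:2404.05992 — 3 statements merged into one kernel-verified Lean document; each statement's English description precedes it below -/
import Mathlib

section
/- Let G be a finite simple graph, let (M,γ) be a complete k-tree-median-decomposition of G, and let {(T_i,β_i)}_{i∈[k]} be a family of k tree-decompositions of G for which there exists an isometric embedding φ of M into T₁□⋯□T_k (π_i denoting projection onto V(T_i)) such that: (i) for every i ∈ [k] and every t ∈ V(T_i) there exists x ∈ V(M) with π_i(φ(x)) = t; (ii) for every x ∈ V(M), γ(x) = ⋂_{i∈[k]} β_i(π_i(φ(x))); and (iii) for every i ∈ [k] and every t ∈ V(T_i), β_i(t) = ⋃ { γ(x) : x ∈ V(M), π_i(φ(x)) = t }. Then for every non-edge {u,v} of G there exists i ∈ [k] such that (T_i,β_i) separates {u,v}. -/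
open SimpleGraph

/-- A graph is chordal if it contains no hole, i.e. no induced cycle of length at least four. -/
def Chordal {V : Type} (G : SimpleGraph V) : Prop :=
  ∀ n : ℕ, 4 ≤ n → IsEmpty (SimpleGraph.cycleGraph n ↪g G)

/-- `(T, β)` is a tree-decomposition of `G`. -/
structure IsTreeDecomp {V B : Type} (G : SimpleGraph V) (T : SimpleGraph B) (β : B → Set V) :
    Prop where
  isTree : T.IsTree
  exists_bag : ∀ v : V, ∃ t, v ∈ β t
  adj_bag : ∀ ⦃u v : V⦄, G.Adj u v → ∃ t, u ∈ β t ∧ v ∈ β t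
  support_connected : ∀ v : V, (T.induce {t | v ∈ β t}).Connected

/-- The chordality of `G`. -/
noncomputable def chor {V : Type} [Fintype V] (G : SimpleGraph V) : ℕ :=
  sInf {k | 0 < k ∧ ∃ H : Fin k → SimpleGraph V, (∀ i, Chordal (H i)) ∧
    ∀ u v : V, G.Adj u v ↔ ∀ i, (H i).Adj u v}

/-- The Cartesian (box) product of a family of graphs. -/
def boxProdPi {ι : Type} {B : ι → Type} (T : ∀ i, SimpleGraph (B i)) :
    SimpleGraph (∀ i, B i) where
  Adj x y := ∃ i, (T i).Adj (x i) (y i) ∧ ∀ j, j ≠ i → x j = y j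
  symm := by
    constructor
    rintro x y ⟨i, h, hj⟩
    exact ⟨i, h.symm, fun j hji => (hj j hji).symm⟩
  loopless := by
    constructor
    rintro x ⟨i, h, -⟩
    exact (T i).irrefl h

/-- The geodesic interval `I(u,v)` of a graph. -/
def geoInterval {V : Type} (G : SimpleGraph V) (u v : V) : Set V :=
  {x | G.dist u v = G.dist u x + G.dist x v}

/-- A set of vertices is (geodesically) convex. -/
def GeoConvex {V : Type} (G : SimpleGraph V) (S : Set V) : Prop :=
  ∀ u ∈ S, ∀ v ∈ S, geoInterval G u v ⊆ S

/-- A median graph. -/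
def MedianGraph {V : Type} (M : SimpleGraph V) : Prop :=
  M.Connected ∧ ∀ u v w : V,
    ∃! x, x ∈ geoInterval M u v ∩ geoInterval M u w ∩ geoInterval M v w

/-- `φ` is an isometric embedding of `G` into `H`. -/
def IsIsometricEmbedding {V W : Type} (G : SimpleGraph V) (H : SimpleGraph W)
    (φ : V → W) : Prop :=
  ∀ u v : V, H.dist (φ u) (φ v) = G.dist u v

/-- `M` has tree-dimension at most `k`. -/
def TreeDimLE {V : Type} (M : SimpleGraph V) (k : ℕ) : Prop :=
  ∃ (B : Fin k → Type) (_ : ∀ i, Fintype (B i)) (T : ∀ i, SimpleGraph (B i)),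
    (∀ i, (T i).IsTree) ∧
    ∃ φ : V → (∀ i, B i), IsIsometricEmbedding M (boxProdPi T) φ

/-- `G` has a complete `k`-tree-median-decomposition. -/
def HasCompleteTMD {V : Type} (G : SimpleGraph V) (k : ℕ) : Prop :=
  ∃ (X : Type) (_ : Fintype X) (M : SimpleGraph X) (γ : X → Set V),
    MedianGraph M ∧ TreeDimLE M k ∧
    (∀ v : V, ({x : X | v ∈ γ x}).Nonempty ∧ GeoConvex M {x : X | v ∈ γ x}) ∧
    (∀ ⦃u v : V⦄, G.Adj u v → ({x : X | u ∈ γ x} ∩ {x : X | v ∈ γ x}).Nonempty) ∧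
    (∀ x : X, G.IsClique (γ x))

/-- The tree-median-dimension of `G`. -/
noncomputable def tmd {V : Type} [Fintype V] (G : SimpleGraph V) : ℕ :=
  sInf {k | 0 < k ∧ HasCompleteTMD G k}

/-- `T` is a path graph. -/
def IsPathGraph {B : Type} (T : SimpleGraph B) : Prop :=
  ∃ n : ℕ, Nonempty (T ≃g SimpleGraph.pathGraph n)

/-- A graph is an interval graph if it can be represented by nonempty closed
intervals of the real line. -/
def IntervalGraph {V : Type} (G : SimpleGraph V) : Prop :=
  ∃ I : V → Set ℝ, (∀ v, ∃ a b : ℝ, a ≤ b ∧ I v = Set.Icc a b) ∧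
    ∀ u v : V, u ≠ v → (G.Adj u v ↔ (I u ∩ I v).Nonempty)

/-- `(T, β)` is a representation of the chordal graph `H`. -/
structure IsRepresentation {V B : Type} (H : SimpleGraph V) (T : SimpleGraph B)
    (β : B → Set V) : Prop where
  isTree : T.IsTree
  support_connected : ∀ v : V, (T.induce {t | v ∈ β t}).Connected
  adj_iff : ∀ u v : V, u ≠ v →
    (H.Adj u v ↔ ({t : B | u ∈ β t} ∩ {t : B | v ∈ β t}).Nonempty)

/-- `G` has path-width at most `k`. -/
def PathwidthLE {V : Type} (G : SimpleGraph V) (k : ℕ) : Prop :=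
  ∃ (B : Type) (_ : Fintype B) (P : SimpleGraph B) (β : B → Set V),
    IsPathGraph P ∧ IsTreeDecomp G P β ∧ ∀ t : B, (β t).ncard ≤ k + 1

/-- The radius of `T` is at most `k`. -/
def RadiusLE {B : Type} (T : SimpleGraph B) (k : ℕ) : Prop :=
  ∃ r : B, ∀ t : B, T.dist r t ≤ k

/-- The lexicographic product of two graphs. -/
def lexProd {V W : Type} (G : SimpleGraph V) (H : SimpleGraph W) :
    SimpleGraph (V × W) where
  Adj x y := G.Adj x.1 y.1 ∨ (x.1 = y.1 ∧ H.Adj x.2 y.2)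
  symm := by
    constructor
    rintro x y (h | ⟨h1, h2⟩)
    · exact Or.inl h.symm
    · exact Or.inr ⟨h1.symm, h2.symm⟩
  loopless := by
    constructor
    rintro x (h | ⟨-, h⟩) <;> exact SimpleGraph.irrefl _ h

private lemma exists_adj_dist {α : Type} {G : SimpleGraph α} (hG : G.Connected)
    {x y : α} (h : x ≠ y) : ∃ c, G.Adj x c ∧ G.dist c y + 1 = G.dist x y := by
  obtain ⟨q, hq⟩ := (hG.preconnected x y).exists_walk_length_eq_dist
  cases q with
  | nil => exact absurd rfl h
  | @cons _ c _ hadj q' =>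
    refine ⟨c, hadj, ?_⟩
    have h1 : G.dist c y ≤ q'.length := SimpleGraph.dist_le q'
    have h2 : q'.length + 1 = G.dist x y := by
      simpa [SimpleGraph.Walk.length_cons] using hq
    have h3 : G.dist x y ≤ G.dist x c + G.dist c y := hG.dist_triangle
    have h4 : G.dist x c ≤ 1 := SimpleGraph.dist_le (SimpleGraph.Walk.cons hadj SimpleGraph.Walk.nil)
    omega

private lemma sum_dist_le_walk_length {k : ℕ} {B : Fin k → Type}
    (T : ∀ i, SimpleGraph (B i)) (hc : ∀ i, (T i).Connected)
    {z w : ∀ i, B i} (p : (boxProdPi T).Walk z w) :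
    ∑ i, (T i).dist (z i) (w i) ≤ p.length := by
  induction p with
  | nil => simp
  | @cons z z' w h p ih =>
    obtain ⟨j, hj, hother⟩ := h
    have hstep : ∑ i, (T i).dist (z i) (w i)
        ≤ ∑ i, ((if i = j then 1 else 0) + (T i).dist (z' i) (w i)) := by
      apply Finset.sum_le_sum
      intro i _
      by_cases hij : i = j
      · subst hij
        simp only [if_pos rfl]
        have h1 : (T i).dist (z i) (z' i) ≤ 1 :=
          SimpleGraph.dist_le (SimpleGraph.Walk.cons hj SimpleGraph.Walk.nil)
        calc (T i).dist (z i) (w i)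
            ≤ (T i).dist (z i) (z' i) + (T i).dist (z' i) (w i) :=
              (hc i).dist_triangle
          _ ≤ 1 + (T i).dist (z' i) (w i) := by omega
      · rw [hother i hij, if_neg hij]
        omega
    have hone : ∑ i, ((if i = j then 1 else 0) + (T i).dist (z' i) (w i))
        = 1 + ∑ i, (T i).dist (z' i) (w i) := by
      rw [Finset.sum_add_distrib, Finset.sum_ite_eq' Finset.univ j (fun _ => 1)]
      simp
    show _ ≤ p.length + 1
    omega

private lemma exists_walk_boxProdPi {k : ℕ} {B : Fin k → Type}
    (T : ∀ i, SimpleGraph (B i)) (hc : ∀ i, (T i).Connected) :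
    ∀ (n : ℕ) (z w : ∀ i, B i), ∑ i, (T i).dist (z i) (w i) ≤ n →
      ∃ p : (boxProdPi T).Walk z w, p.length ≤ n := by
  intro n
  induction n with
  | zero =>
    intro z w h
    have hz : z = w := by
      funext i
      have hi : (T i).dist (z i) (w i) = 0 := by
        by_contra hne
        have h1 : 1 ≤ (T i).dist (z i) (w i) := Nat.one_le_iff_ne_zero.mpr hne
        have h2 : (T i).dist (z i) (w i) ≤ ∑ l, (T l).dist (z l) (w l) :=
          Finset.single_le_sum (f := fun l => (T l).dist (z l) (w l))
            (fun l _ => Nat.zero_le _) (Finset.mem_univ i)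
        omega
      exact (((hc i).preconnected (z i) (w i)).dist_eq_zero_iff).mp hi
    subst hz
    exact ⟨SimpleGraph.Walk.nil, le_refl 0⟩
  | succ n ih =>
    intro z w h
    by_cases hzw : z = w
    · subst hzw
      exact ⟨SimpleGraph.Walk.nil, Nat.zero_le _⟩
    · have hj : ∃ j, z j ≠ w j := by
        by_contra hno
        push_neg at hno
        exact hzw (funext hno)
      obtain ⟨j, hj⟩ := hj
      classical
      obtain ⟨c, hadj, hclt⟩ := exists_adj_dist (hc j) hj
      set z' := Function.update z j c with hz'
      have hadjP : (boxProdPi T).Adj z z' := by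
        refine ⟨j, ?_, fun l hl => ?_⟩
        · simpa [hz', Function.update_self] using hadj
        · rw [hz', Function.update_of_ne hl]
      have e1 : ∑ i, (T i).dist (z' i) (w i)
          = (T j).dist c (w j) + ∑ i ∈ Finset.univ.erase j, (T i).dist (z i) (w i) := by
        rw [← Finset.add_sum_erase Finset.univ (fun i => (T i).dist (z' i) (w i))
          (Finset.mem_univ j)]
        congr 1
        · rw [hz', Function.update_self]
        · exact Finset.sum_congr rfl fun i hi => by
            rw [hz', Function.update_of_ne (Finset.ne_of_mem_erase hi)]
      have e2 : ∑ i, (T i).dist (z i) (w i)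
          = (T j).dist (z j) (w j) + ∑ i ∈ Finset.univ.erase j, (T i).dist (z i) (w i) :=
        (Finset.add_sum_erase Finset.univ (fun i => (T i).dist (z i) (w i))
          (Finset.mem_univ j)).symm
      have hsum' : ∑ i, (T i).dist (z' i) (w i) ≤ n := by omega -- uses hclt via e1 e2 h
      obtain ⟨p, hp⟩ := ih z' w hsum'
      exact ⟨SimpleGraph.Walk.cons hadjP p, by
        simpa [SimpleGraph.Walk.length_cons] using Nat.succ_le_succ hp⟩

private lemma dist_boxProdPi {k : ℕ} {B : Fin k → Type}
    (T : ∀ i, SimpleGraph (B i)) (hc : ∀ i, (T i).Connected) (z w : ∀ i, B i) :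
    (boxProdPi T).dist z w = ∑ i, (T i).dist (z i) (w i) := by
  obtain ⟨p, hp⟩ := exists_walk_boxProdPi T hc _ z w le_rfl
  refine le_antisymm ((SimpleGraph.dist_le p).trans hp) ?_
  obtain ⟨q, hq⟩ := p.reachable.exists_walk_length_eq_dist
  exact hq ▸ sum_dist_le_walk_length T hc q

/-- Given a complete `k`-tree-median-decomposition `(M,γ)` of `G` and a family
of `k` tree-decompositions obtained from it via an isometric embedding as in Stavropoulos'
theorem, the family is non-edge-separating. -/
theorem stmt_9 {V : Type} [Fintype V] (G : SimpleGraph V) (k : ℕ)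
    (X : Type) [Fintype X] (M : SimpleGraph X) (γ : X → Set V)
    (hM : MedianGraph M)
    (hsupp : ∀ v : V, ({x : X | v ∈ γ x}).Nonempty ∧ GeoConvex M {x : X | v ∈ γ x})
    (hadjbag : ∀ ⦃u v : V⦄, G.Adj u v →
      ({x : X | u ∈ γ x} ∩ {x : X | v ∈ γ x}).Nonempty)
    (hclique : ∀ x : X, G.IsClique (γ x))
    (B : Fin k → Type) (Bfin : ∀ i, Fintype (B i))
    (T : ∀ i, SimpleGraph (B i)) (β : ∀ i, B i → Set V)
    (hTD : ∀ i, IsTreeDecomp G (T i) (β i))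
    (φ : X → ∀ i, B i) (hφ : IsIsometricEmbedding M (boxProdPi T) φ)
    (hsurj : ∀ (i : Fin k) (t : B i), ∃ x : X, φ x i = t)
    (hgamma : ∀ x : X, γ x = ⋂ i, β i (φ x i))
    (hbeta : ∀ (i : Fin k) (t : B i), β i t = ⋃ x ∈ {x : X | φ x i = t}, γ x) :
    ∀ u v : V, u ≠ v → ¬ G.Adj u v →
      ∃ i, ∀ t, ¬ (u ∈ β i t ∧ v ∈ β i t) := by
  intro u v huv hnadj
  by_contra hcon
  push_neg at hcon
  have hMc : M.Connected := hM.1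
  have hc : ∀ i, (T i).Connected := fun i => (hTD i).isTree.isConnected
  have hdist : ∀ x y : X, M.dist x y = ∑ i, (T i).dist (φ x i) (φ y i) := by
    intro x y
    rw [← hφ x y, dist_boxProdPi T hc]
  have hAB : ∀ x : X, u ∈ γ x → v ∈ γ x → False := fun x hu hv =>
    hnadj (hclique x hu hv huv)
  -- choose a minimizing pair
  set S : Set ℕ := {n | ∃ a, u ∈ γ a ∧ ∃ b, v ∈ γ b ∧ M.dist a b = n} with hS
  have hSne : S.Nonempty := by
    obtain ⟨a, ha⟩ := (hsupp u).1
    obtain ⟨b, hb⟩ := (hsupp v).1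
    exact ⟨M.dist a b, a, ha, b, hb, rfl⟩
  obtain ⟨a, ha, b, hb, hab⟩ := Nat.sInf_mem hSne
  have hmin : ∀ a' : X, u ∈ γ a' → ∀ b' : X, v ∈ γ b' → M.dist a b ≤ M.dist a' b' := by
    intro a' ha' b' hb'
    rw [hab]
    exact Nat.sInf_le ⟨a', ha', b', hb', rfl⟩
  -- a coordinate where φ a and φ b differ
  have hj : ∃ j, φ a j ≠ φ b j := by
    by_contra hno
    push_neg at hno
    have h0 : M.dist a b = 0 := by
      rw [hdist a b]
      exact Finset.sum_eq_zero fun i _ => by rw [hno i]; exact SimpleGraph.dist_self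
    have := ((hMc.preconnected a b).dist_eq_zero_iff).mp h0
    exact hAB a ha (this ▸ hb)
  obtain ⟨j, hj⟩ := hj
  obtain ⟨t, hut, hvt⟩ := hcon j
  rw [hbeta j t] at hut hvt
  simp only [Set.mem_iUnion, Set.mem_setOf_eq, exists_prop] at hut hvt
  obtain ⟨x, hxj, hux⟩ := hut
  obtain ⟨y, hyj, hvy⟩ := hvt
  -- median of a, b, x
  obtain ⟨m, hm, -⟩ := hM.2 a b x
  have hmA : u ∈ γ m := (hsupp u).2 a ha x hux hm.1.2
  have hIab : M.dist a b = M.dist a m + M.dist m b := hm.1.1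
  have hle : M.dist a b ≤ M.dist m b := hmin m hmA b hb
  have ham : M.dist a m = 0 := by omega
  have hma : a = m := ((hMc.preconnected a m).dist_eq_zero_iff).mp ham
  have hbx : M.dist b x = M.dist b a + M.dist a x := by
    have := hm.2
    rw [← hma] at this
    exact this
  -- median of a, b, y
  obtain ⟨m', hm', -⟩ := hM.2 a b y
  have hmB : v ∈ γ m' := (hsupp v).2 b hb y hvy hm'.2
  have hIab' : M.dist a b = M.dist a m' + M.dist m' b := hm'.1.1
  have hle' : M.dist a b ≤ M.dist a m' := hmin a ha m' hmB
  have hm'b : M.dist m' b = 0 := by omega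
  have hmb : m' = b := ((hMc.preconnected m' b).dist_eq_zero_iff).mp (by
    rw [SimpleGraph.dist_comm] at hm'b ⊢
    · exact hm'b)
  have hay : M.dist a y = M.dist a b + M.dist b y := by
    have := hm'.1.2
    rw [hmb] at this
    exact this
  -- coordinatewise equalities
  have tri1 : ∀ i ∈ Finset.univ,
      (T i).dist (φ b i) (φ x i) ≤ (T i).dist (φ b i) (φ a i) + (T i).dist (φ a i) (φ x i) :=
    fun i _ => (hc i).dist_triangle
  have eq1 : ∀ i ∈ (Finset.univ : Finset (Fin k)),
      (T i).dist (φ b i) (φ x i) = (T i).dist (φ b i) (φ a i) + (T i).dist (φ a i) (φ x i) := by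
    rw [← Finset.sum_eq_sum_iff_of_le tri1, Finset.sum_add_distrib,
      ← hdist, ← hdist, ← hdist]
    exact hbx
  have tri2 : ∀ i ∈ Finset.univ,
      (T i).dist (φ a i) (φ y i) ≤ (T i).dist (φ a i) (φ b i) + (T i).dist (φ b i) (φ y i) :=
    fun i _ => (hc i).dist_triangle
  have eq2 : ∀ i ∈ (Finset.univ : Finset (Fin k)),
      (T i).dist (φ a i) (φ y i) = (T i).dist (φ a i) (φ b i) + (T i).dist (φ b i) (φ y i) := by
    rw [← Finset.sum_eq_sum_iff_of_le tri2, Finset.sum_add_distrib,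
      ← hdist, ← hdist, ← hdist]
    exact hay
  have e1 := eq1 j (Finset.mem_univ j)
  have e2 := eq2 j (Finset.mem_univ j)
  rw [hxj] at e1
  rw [hyj] at e2
  have hcomm : (T j).dist (φ b j) (φ a j) = (T j).dist (φ a j) (φ b j) :=
    SimpleGraph.dist_comm
  have hzero : (T j).dist (φ a j) (φ b j) = 0 := by
    have hcomm2 : (T j).dist (φ b j) t = (T j).dist t (φ b j) := SimpleGraph.dist_comm
    omega
  exact hj (((hc j).preconnected (φ a j) (φ b j)).dist_eq_zero_iff.mp hzero)
end

section
/- Let G be a finite simple graph with at least one non-edge. Then the following three quantities are equal: (a) the minimum positive integer k such that G is the intersection of k interval graphs on V(G); (b) the minimum cardinality of a non-edge-separating family of path-decompositions of G; (c) the minimum positive integer k for which there exist finite paths P₁,…,P_k and an assignment to each vertex v of G of a nonempty convex set S_v of vertices of the Cartesian product P₁□⋯□P_k such that two distinct vertices u,v of G are adjacent if and only if S_u ∩ S_v ≠ ∅. -/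
open SimpleGraph

namespace Stmt10

/-- Walk up in pathGraph. -/
lemma pg_walk_up {n : ℕ} : ∀ (d : ℕ) (u v : Fin n), v.val = u.val + d →
    ∃ w : (pathGraph n).Walk u v, w.length = d := by
  intro d
  induction d with
  | zero => intro u v h; have : u = v := Fin.ext (by omega); subst this; exact ⟨.nil, rfl⟩
  | succ d ih =>
    intro u v h
    have hu1 : u.val + 1 < n := by have := v.isLt; omega
    set u' : Fin n := ⟨u.val + 1, hu1⟩ with hu'
    have hadj : (pathGraph n).Adj u u' := by
      rw [pathGraph_adj]; left; rfl
    obtain ⟨w, hw⟩ := ih u' v (by simp [hu']; omega)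
    exact ⟨.cons hadj w, by simp [hw]⟩

lemma pg_dist_le {n : ℕ} (u v : Fin n) : (pathGraph n).dist u v ≤ Nat.dist u.val v.val := by
  rcases le_total u.val v.val with h | h
  · obtain ⟨w, hw⟩ := pg_walk_up (v.val - u.val) u v (by omega)
    calc (pathGraph n).dist u v ≤ w.length := dist_le w
    _ = _ := by rw [hw, Nat.dist]; omega
  · obtain ⟨w, hw⟩ := pg_walk_up (u.val - v.val) v u (by omega)
    calc (pathGraph n).dist u v = (pathGraph n).dist v u := dist_comm
    _ ≤ w.length := dist_le w
    _ = _ := by rw [hw, Nat.dist]; omega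

lemma pg_adj_dist {n : ℕ} {u v : Fin n} (h : (pathGraph n).Adj u v) :
    Nat.dist u.val v.val = 1 := by
  rw [pathGraph_adj] at h
  rcases h with h | h <;> simp [Nat.dist] <;> omega

lemma pg_walk_ge {n : ℕ} {u v : Fin n} (w : (pathGraph n).Walk u v) :
    Nat.dist u.val v.val ≤ w.length := by
  induction w with
  | nil => simp
  | @cons a b c h p ih =>
    have := pg_adj_dist h
    have := Nat.dist.triangle_inequality a.val b.val c.val
    simp only [Walk.length_cons]
    omega

lemma pg_dist {n : ℕ} (u v : Fin n) : (pathGraph n).dist u v = Nat.dist u.val v.val := by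
  refine le_antisymm (pg_dist_le u v) ?_
  have hr : (pathGraph n).Reachable u v := by
    rcases le_total u.val v.val with h | h
    · obtain ⟨w, _⟩ := pg_walk_up (v.val - u.val) u v (by omega); exact ⟨w⟩
    · obtain ⟨w, _⟩ := pg_walk_up (u.val - v.val) v u (by omega); exact Reachable.symm ⟨w⟩
  obtain ⟨w, hw⟩ := hr.exists_walk_length_eq_dist
  rw [← hw]; exact pg_walk_ge w

/-- Intermediate value: a walk from u to v passes through every x with u ≤ x ≤ v. -/
lemma pg_iv {n : ℕ} : ∀ {u v : Fin n} (w : (pathGraph n).Walk u v) (x : Fin n),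
    u.val ≤ x.val → x.val ≤ v.val → x ∈ w.support := by
  intro u v w
  induction w with
  | nil => intro x h1 h2; have : x = _ := Fin.ext (le_antisymm h2 h1); simp [this]
  | @cons a b c h p ih =>
    intro x h1 h2
    by_cases hx : x = a
    · simp [hx]
    · have hax : a.val < x.val := by
        rcases lt_or_eq_of_le h1 with h | h
        · exact h
        · exact absurd (Fin.ext h.symm : x = a) hx
      have hb : b.val ≤ x.val := by
        rw [pathGraph_adj] at h
        omega
      simp only [Walk.support_cons, List.mem_cons]
      exact Or.inr (ih x hb h2)

lemma pg_iv' {n : ℕ} {u v : Fin n} (w : (pathGraph n).Walk u v) (x : Fin n)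
    (h1 : v.val ≤ x.val) (h2 : x.val ≤ u.val) : x ∈ w.support := by
  have := pg_iv w.reverse x h1 h2
  rwa [Walk.support_reverse, List.mem_reverse] at this

/-- Paths in the path graph are unique. -/
lemma pg_path_unique {n : ℕ} : ∀ {u v : Fin n} (p q : (pathGraph n).Walk u v),
    p.IsPath → q.IsPath → p = q := by
  intro u v p
  induction p with
  | nil => intro q _ hq; exact (Walk.isPath_iff_eq_nil.mp hq).symm
  | @cons a b c h p ih =>
    intro q hp hq
    rw [Walk.cons_isPath_iff] at hp
    -- a ≠ c
    have hac : a ≠ c := by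
      intro hEq; subst hEq
      exact hp.2 (p.end_mem_support)
    cases q with
    | nil => exact absurd rfl hac
    | @cons _ b' _ h' q' =>
      rw [Walk.cons_isPath_iff] at hq
      have hbb : b = b' := by
        by_contra hne
        rw [pathGraph_adj] at h h'
        -- b and b' are a±1, distinct; one is a+1, the other a-1
        rcases h with h | h <;> rcases h' with h' | h'
        · exact hne (Fin.ext (by omega))
        · -- b = a+1, b' = a-1 : then path p : b → c avoids a, path q' : b' → c avoids a
          -- from q' : b' → c with b' < a: if c > a then a in q'.support
          have hb : b.val = a.val + 1 := h.symm
          have hb' : b'.val + 1 = a.val := h'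
          by_cases hca : c.val ≤ a.val
          · -- p : b → c, b > a ≥ c : a ∈ p.support
            exact absurd (pg_iv' p a hca (by omega)) hp.2
          · exact absurd (pg_iv q' a (by omega) (by omega)) hq.2
        · have hb : b.val + 1 = a.val := h
          have hb' : b'.val = a.val + 1 := h'.symm
          by_cases hca : c.val ≤ a.val
          · exact absurd (pg_iv' q' a hca (by omega)) hq.2
          · exact absurd (pg_iv p a (by omega) (by omega)) hp.2
        · exact hne (Fin.ext (by omega))
      subst hbb
      rw [ih q' hp.1 hq.1]

lemma pg_isTree {n : ℕ} (hn : 0 < n) : (pathGraph n).IsTree := by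
  constructor
  · obtain ⟨m, rfl⟩ : ∃ m, n = m + 1 := ⟨n - 1, by omega⟩
    exact pathGraph_connected m
  · rw [isAcyclic_iff_path_unique]
    intro v w p q
    exact Subtype.ext (pg_path_unique p.1 q.1 p.2 q.2)

/-- The induced graph on an interval of the path graph is connected. -/
lemma pg_icc_connected {n : ℕ} (a b : ℕ) (hab : a ≤ b) (hbn : b < n) :
    ((pathGraph n).induce {t : Fin n | a ≤ t.val ∧ t.val ≤ b}).Connected := by
  set s : Set (Fin n) := {t : Fin n | a ≤ t.val ∧ t.val ≤ b} with hs
  have hmem : ∀ x : ℕ, a ≤ x → x ≤ b → ∃ t : Fin n, t.val = x ∧ t ∈ s := by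
    intro x h1 h2
    exact ⟨⟨x, by omega⟩, rfl, ⟨h1, h2⟩⟩
  rw [connected_iff]
  refine ⟨?_, ?_⟩
  · -- preconnected
    have key : ∀ (d : ℕ) (u v : s), (v : Fin n).val = (u : Fin n).val + d →
        ((pathGraph n).induce s).Reachable u v := by
      intro d
      induction d with
      | zero => intro u v h; have : u = v := Subtype.ext (Fin.ext (by omega)); subst this; rfl
      | succ d ih =>
        intro u v h
        have h1 : a ≤ (u : Fin n).val := u.2.1
        have h2 : (v : Fin n).val ≤ b := v.2.2
        have hu1 : (u : Fin n).val + 1 < n := by have := (v : Fin n).isLt; omega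
        set u' : s := ⟨⟨(u : Fin n).val + 1, hu1⟩, ⟨show a ≤ (u : Fin n).val + 1 by omega, show (u : Fin n).val + 1 ≤ b by omega⟩⟩ with hu'
        have hadj : ((pathGraph n).induce s).Adj u u' := by
          simp only [comap_adj, Function.Embedding.coe_subtype]
          rw [pathGraph_adj]; left; rfl
        exact (hadj.reachable).trans (ih u' v (show (v : Fin n).val = (u : Fin n).val + 1 + d by omega))
    intro u v
    rcases le_total (u : Fin n).val (v : Fin n).val with h | h
    · exact key ((v : Fin n).val - (u : Fin n).val) u v (by omega)
    · exact (key ((u : Fin n).val - (v : Fin n).val) v u (by omega)).symm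
  · exact ⟨⟨⟨a, by omega⟩, ⟨le_refl a, hab⟩⟩⟩

variable {k : ℕ} {B : Fin k → Type} {T : ∀ i, SimpleGraph (B i)}

lemma bpp_lift (x : ∀ i, B i) (i : Fin k) {p q : B i} (w : (T i).Walk p q) :
    ∃ W : (boxProdPi T).Walk (Function.update x i p) (Function.update x i q),
      W.length = w.length := by
  induction w with
  | nil => exact ⟨.nil, rfl⟩
  | @cons a b c h w ih =>
    obtain ⟨W, hW⟩ := ih
    have hadj : (boxProdPi T).Adj (Function.update x i a) (Function.update x i b) :=
      ⟨i, by simpa using h, fun j hj => by simp [Function.update_of_ne hj]⟩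
    exact ⟨.cons hadj W, by simp [hW]⟩

/-- interpolating sequence -/
private def zf (x y : ∀ i, B i) (m : ℕ) : ∀ i, B i :=
  fun i => if i.val < m then y i else x i

lemma zf_zero (x y : ∀ i, B i) : zf x y 0 = x := by
  funext i; simp [zf]

lemma zf_last (x y : ∀ i, B i) : zf x y k = y := by
  funext i; simp [zf, i.isLt]

lemma zf_step (x y : ∀ i, B i) (m : ℕ) (hm : m < k) :
    Function.update (zf x y m) ⟨m, hm⟩ (x ⟨m, hm⟩) = zf x y m ∧
    Function.update (zf x y m) ⟨m, hm⟩ (y ⟨m, hm⟩) = zf x y (m + 1) := by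
  constructor
  · funext i
    by_cases hi : i = ⟨m, hm⟩
    · subst hi; simp [zf]
    · simp [Function.update_of_ne hi]
  · funext i
    by_cases hi : i = ⟨m, hm⟩
    · subst hi; simp [zf]
    · have : i.val ≠ m := fun h => hi (Fin.ext h)
      simp only [Function.update_of_ne hi, zf]
      by_cases h2 : i.val < m
      · rw [if_pos h2, if_pos (show i.val < m + 1 by omega)]
      · rw [if_neg h2, if_neg (show ¬ i.val < m + 1 by omega)]

lemma zf_reach (hc : ∀ i, (T i).Connected) (x y : ∀ i, B i) (m : ℕ) (hm : m < k) :
    ∃ W : (boxProdPi T).Walk (zf x y m) (zf x y (m + 1)),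
      W.length = (T ⟨m, hm⟩).dist (x ⟨m, hm⟩) (y ⟨m, hm⟩) := by
  obtain ⟨w, hw⟩ := (hc ⟨m, hm⟩).exists_walk_length_eq_dist (x ⟨m, hm⟩) (y ⟨m, hm⟩)
  obtain ⟨W, hW⟩ := bpp_lift (zf x y m) ⟨m, hm⟩ w
  obtain ⟨h1, h2⟩ := zf_step x y m hm
  exact ⟨W.copy h1 h2, by rw [Walk.length_copy, hW, hw]⟩

lemma bpp_reach_aux (hc : ∀ i, (T i).Connected) (x y : ∀ i, B i) :
    ∀ m, (boxProdPi T).Reachable x (zf x y m) := by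
  intro m
  induction m with
  | zero => rw [zf_zero]
  | succ m ih =>
    by_cases hm : m < k
    · obtain ⟨W, -⟩ := zf_reach hc x y m hm
      exact ih.trans ⟨W⟩
    · have : zf x y (m+1) = zf x y m := by
        funext i
        have := i.isLt
        simp only [zf]
        rw [if_pos (by omega), if_pos (by omega)]
      rw [this]; exact ih

lemma bpp_connected (hc : ∀ i, (T i).Connected) : (boxProdPi T).Connected := by
  rw [connected_iff]
  constructor
  · intro x y
    have := bpp_reach_aux hc x y k
    rwa [zf_last] at this
  · exact ⟨fun i => ((hc i).nonempty).some⟩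

lemma bpp_dist_le (hc : ∀ i, (T i).Connected) (x y : ∀ i, B i) :
    (boxProdPi T).dist x y ≤ ∑ i, (T i).dist (x i) (y i) := by
  have key : ∀ m, m ≤ k → (boxProdPi T).dist x (zf x y m) ≤
      ∑ i ∈ Finset.univ.filter (fun i : Fin k => i.val < m), (T i).dist (x i) (y i) := by
    intro m
    induction m with
    | zero => intro _; rw [zf_zero]; simp
    | succ m ih =>
      intro hm
      have hmk : m < k := by omega
      have hfil : Finset.univ.filter (fun i : Fin k => i.val < m + 1) =
          insert ⟨m, hmk⟩ (Finset.univ.filter (fun i : Fin k => i.val < m)) := by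
        ext i
        simp only [Finset.mem_filter, Finset.mem_univ, true_and, Finset.mem_insert, Fin.ext_iff]
        omega
      rw [hfil, Finset.sum_insert (by simp)]
      obtain ⟨W, hW⟩ := zf_reach hc x y m hmk
      calc (boxProdPi T).dist x (zf x y (m+1))
          ≤ (boxProdPi T).dist x (zf x y m) + (boxProdPi T).dist (zf x y m) (zf x y (m+1)) :=
            (bpp_connected hc).dist_triangle
        _ ≤ _ := by
            have h1 := ih (by omega)
            have h2 : (boxProdPi T).dist (zf x y m) (zf x y (m+1)) ≤
                (T ⟨m, hmk⟩).dist (x ⟨m, hmk⟩) (y ⟨m, hmk⟩) := hW ▸ dist_le W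
            omega
  have := key k le_rfl
  rw [zf_last] at this
  convert this using 1
  congr 1
  symm
  rw [Finset.filter_true_of_mem]
  intro i _
  exact i.isLt

lemma bpp_walk_ge (hc : ∀ i, (T i).Connected) {x y : ∀ i, B i}
    (W : (boxProdPi T).Walk x y) :
    ∑ i, (T i).dist (x i) (y i) ≤ W.length := by
  induction W with
  | nil => simp
  | @cons a b c h W ih =>
    obtain ⟨i₀, hadj, heq⟩ := h
    have step : ∀ i : Fin k, (T i).dist (a i) (c i) ≤
        (T i).dist (b i) (c i) + (if i = i₀ then 1 else 0) := by
      intro i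
      by_cases hi : i = i₀
      · subst hi
        rw [if_pos rfl]
        have htri : (T i).dist (a i) (c i) ≤ (T i).dist (a i) (b i) + (T i).dist (b i) (c i) :=
          (hc i).dist_triangle
        have : (T i).dist (a i) (b i) = 1 := dist_eq_one_iff_adj.mpr hadj
        omega
      · rw [heq i hi, if_neg hi, add_zero]
    change _ ≤ W.length + 1
    calc ∑ i, (T i).dist (a i) (c i)
        ≤ ∑ i, ((T i).dist (b i) (c i) + if i = i₀ then 1 else 0) :=
          Finset.sum_le_sum (fun i _ => step i)
      _ = (∑ i, (T i).dist (b i) (c i)) + 1 := by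
          rw [Finset.sum_add_distrib, Finset.sum_ite_eq' Finset.univ i₀ (fun _ => 1)]
          simp
      _ ≤ W.length + 1 := by omega

lemma bpp_dist (hc : ∀ i, (T i).Connected) (x y : ∀ i, B i) :
    (boxProdPi T).dist x y = ∑ i, (T i).dist (x i) (y i) := by
  refine le_antisymm (bpp_dist_le hc x y) ?_
  obtain ⟨W, hW⟩ := ((bpp_connected hc).preconnected x y).exists_walk_length_eq_dist
  rw [← hW]
  exact bpp_walk_ge hc W

/-- membership in geodesic interval of a box product, coordinatewise. -/
lemma bpp_geoInterval (hc : ∀ i, (T i).Connected) (u v x : ∀ i, B i) :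
    x ∈ geoInterval (boxProdPi T) u v ↔
      ∀ i, (T i).dist (u i) (v i) = (T i).dist (u i) (x i) + (T i).dist (x i) (v i) := by
  simp only [geoInterval, Set.mem_setOf_eq, bpp_dist hc]
  rw [← Finset.sum_add_distrib]
  constructor
  · intro h i
    have hle : ∀ i ∈ Finset.univ, (T i).dist (u i) (v i) ≤
        (T i).dist (u i) (x i) + (T i).dist (x i) (v i) := fun i _ => (hc i).dist_triangle
    exact (Finset.sum_eq_sum_iff_of_le hle).mp h i (Finset.mem_univ i)
  · intro h
    exact Finset.sum_congr rfl (fun i _ => h i)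

variable {V W : Type} {G : SimpleGraph V} {H : SimpleGraph W}

lemma iso_dist_le (e : G ≃g H) (u v : V) : H.dist (e u) (e v) ≤ G.dist u v := by
  by_cases h : G.Reachable u v
  · obtain ⟨w, hw⟩ := h.exists_walk_length_eq_dist
    calc H.dist (e u) (e v) ≤ (w.map e.toHom).length := dist_le _
    _ = G.dist u v := by rw [Walk.length_map, hw]
  · have h' : ¬ H.Reachable (e u) (e v) := by
      rwa [Iso.reachable_iff]
    rw [dist_eq_zero_of_not_reachable h, dist_eq_zero_of_not_reachable h']

lemma iso_dist (e : G ≃g H) (u v : V) : H.dist (e u) (e v) = G.dist u v := by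
  refine le_antisymm (iso_dist_le e u v) ?_
  have := iso_dist_le e.symm (e u) (e v)
  simpa using this

/-- Isomorphism of induced subgraphs from an isomorphism. -/
def isoInduce (e : G ≃g H) (s : Set V) : G.induce s ≃g H.induce (e '' s) where
  toEquiv := e.toEquiv.subtypeEquiv (fun a => by
    constructor
    · intro h; exact Set.mem_image_of_mem _ h
    · rintro ⟨b, hb, hba⟩
      rwa [← e.toEquiv.injective hba])
  map_rel_iff' := by
    intro a b
    simp only [comap_adj, Function.Embedding.coe_subtype, Equiv.subtypeEquiv_apply]
    exact e.map_rel_iff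

lemma connected_induce_image (e : G ≃g H) (s : Set V) (h : (G.induce s).Connected) :
    (H.induce (e '' s)).Connected :=
  ((isoInduce e s).connected_iff).mp h

def BoxRep {V : Type} (G : SimpleGraph V) (k : ℕ) : Prop :=
  ∃ (N : Fin k → ℕ) (a b : Fin k → V → ℕ),
    (∀ i v, a i v ≤ b i v ∧ b i v < N i) ∧
    (∀ u v : V, u ≠ v → (G.Adj u v ↔ ∀ i, a i u ≤ b i v ∧ a i v ≤ b i u))

lemma nat_dist_eq (a b : ℕ) : Nat.dist a b = a - b + (b - a) := rfl

variable {V : Type} [Fintype V] {G : SimpleGraph V}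

lemma icc_inter {a b c d : ℝ} (hab : a ≤ b) (hcd : c ≤ d) :
    (Set.Icc a b ∩ Set.Icc c d).Nonempty ↔ a ≤ d ∧ c ≤ b := by
  rw [Set.Icc_inter_Icc, Set.nonempty_Icc, sup_le_iff, le_inf_iff, le_inf_iff]
  constructor
  · rintro ⟨⟨-, h1⟩, h2, -⟩; exact ⟨h1, h2⟩
  · rintro ⟨h1, h2⟩; exact ⟨⟨hab, h1⟩, h2, hcd⟩

lemma setA_to_box {k : ℕ} (H : Fin k → SimpleGraph V) (hint : ∀ i, IntervalGraph (H i))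
    (hiff : ∀ u v : V, G.Adj u v ↔ ∀ i, (H i).Adj u v) : BoxRep G k := by
  classical
  choose I hI1 hI2 using hint
  choose av bv hab hIcc using hI1
  -- endpoint finsets and rank functions
  set E : Fin k → Finset ℝ := fun i =>
    Finset.image (av i) Finset.univ ∪ Finset.image (bv i) Finset.univ with hE
  set r : Fin k → ℝ → ℕ := fun i x => ((E i).filter (fun y => y ≤ x)).card with hrdef
  have hmono : ∀ i {x y : ℝ}, x ≤ y → r i x ≤ r i y := by
    intro i x y hxy
    exact Finset.card_le_card (Finset.monotone_filter_right _ (fun z _ hz => le_trans hz hxy))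
  have hrefl : ∀ i {x y : ℝ}, x ∈ E i → y ∈ E i → r i x ≤ r i y → x ≤ y := by
    intro i x y hx hy hr
    by_contra hlt
    push_neg at hlt
    have hss : (E i).filter (fun z => z ≤ y) ⊂ (E i).filter (fun z => z ≤ x) := by
      refine ⟨Finset.monotone_filter_right _ (fun z _ hz => le_trans hz hlt.le), ?_⟩
      intro hsub
      have hxmem : x ∈ (E i).filter (fun z => z ≤ x) := Finset.mem_filter.mpr ⟨hx, le_refl x⟩
      have := Finset.mem_filter.mp (hsub hxmem)
      exact absurd this.2 (not_le.mpr hlt)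
    have := Finset.card_lt_card hss
    simp only [hrdef] at hr
    omega
  have havE : ∀ i (v : V), av i v ∈ E i := fun i v =>
    Finset.mem_union_left _ (Finset.mem_image.mpr ⟨v, Finset.mem_univ v, rfl⟩)
  have hbvE : ∀ i (v : V), bv i v ∈ E i := fun i v =>
    Finset.mem_union_right _ (Finset.mem_image.mpr ⟨v, Finset.mem_univ v, rfl⟩)
  refine ⟨fun i => (E i).card + 1, fun i v => r i (av i v), fun i v => r i (bv i v), ?_, ?_⟩
  · intro i v
    refine ⟨hmono i (hab i v), ?_⟩
    show r i (bv i v) < (E i).card + 1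
    have := Finset.card_filter_le (E i) (fun y => y ≤ bv i v)
    simp only [hrdef]
    omega
  · intro u v huv
    rw [hiff]
    constructor
    · intro h i
      have := (hI2 i u v huv).mp (h i)
      rw [hIcc i u, hIcc i v, icc_inter (hab i u) (hab i v)] at this
      exact ⟨hmono i this.1, hmono i this.2⟩
    · intro h i
      rw [hI2 i u v huv, hIcc i u, hIcc i v, icc_inter (hab i u) (hab i v)]
      exact ⟨hrefl i (havE i u) (hbvE i v) (h i).1, hrefl i (havE i v) (hbvE i u) (h i).2⟩

lemma box_to_setA {k : ℕ} (hk : 0 < k) (hbox : BoxRep G k) :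
    ∃ H : Fin k → SimpleGraph V, (∀ i, IntervalGraph (H i)) ∧
      ∀ u v : V, G.Adj u v ↔ ∀ i, (H i).Adj u v := by
  obtain ⟨N, a, b, hab, hiff⟩ := hbox
  refine ⟨fun i =>
    { Adj := fun u v => u ≠ v ∧ a i u ≤ b i v ∧ a i v ≤ b i u
      symm := by constructor; rintro u v ⟨h1, h2, h3⟩; exact ⟨h1.symm, h3, h2⟩
      loopless := by constructor; rintro u ⟨h1, -⟩; exact h1 rfl }, ?_, ?_⟩
  · intro i
    refine ⟨fun v => Set.Icc (a i v : ℝ) (b i v : ℝ), ?_, ?_⟩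
    · intro v
      exact ⟨(a i v : ℝ), (b i v : ℝ), by exact_mod_cast (hab i v).1, rfl⟩
    intro u v huv
    rw [icc_inter (by exact_mod_cast (hab i u).1) (by exact_mod_cast (hab i v).1)]
    constructor
    · rintro ⟨-, h2, h3⟩; exact ⟨by exact_mod_cast h2, by exact_mod_cast h3⟩
    · rintro ⟨h2, h3⟩; exact ⟨huv, by exact_mod_cast h2, by exact_mod_cast h3⟩
  · intro u v
    constructor
    · intro h i
      exact ⟨h.ne, (hiff u v h.ne).mp h i⟩
    · intro h
      have hne : u ≠ v := (h ⟨0, hk⟩).1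
      exact (hiff u v hne).mpr (fun i => (h i).2)

variable {V : Type} {G : SimpleGraph V}

lemma box_to_setB {k : ℕ} (hV : Nonempty V) (hbox : BoxRep G k) :
    ∃ (B : Fin k → Type) (_ : ∀ i, Fintype (B i))
      (T : ∀ i, SimpleGraph (B i)) (β : ∀ i, B i → Set V),
      (∀ i, IsTreeDecomp G (T i) (β i) ∧ IsPathGraph (T i)) ∧
      ∀ u v : V, u ≠ v → ¬ G.Adj u v → ∃ i, ∀ t, ¬ (u ∈ β i t ∧ v ∈ β i t) := by
  obtain ⟨N, a, b, hab, hiff⟩ := hbox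
  obtain ⟨v0⟩ := hV
  have hN : ∀ i, 0 < N i := fun i => by have := hab i v0; omega
  refine ⟨fun i => Fin (N i), fun i => inferInstance, fun i => pathGraph (N i),
    fun i t => {v | a i v ≤ t.val ∧ t.val ≤ b i v}, ?_, ?_⟩
  · intro i
    refine ⟨?_, ⟨N i, ⟨Iso.refl⟩⟩⟩
    constructor
    · exact pg_isTree (hN i)
    · intro v
      exact ⟨⟨a i v, by have := hab i v; omega⟩, le_refl _, (hab i v).1⟩
    · intro u v hadj
      have h := (hiff u v hadj.ne).mp hadj i
      have h1 := hab i u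
      have h2 := hab i v
      refine ⟨⟨max (a i u) (a i v), by omega⟩, ?_, ?_⟩
      · exact ⟨by simp, by simp; omega⟩
      · exact ⟨by simp, by simp; omega⟩
    · intro v
      exact pg_icc_connected (a i v) (b i v) (hab i v).1 (hab i v).2
  · intro u v huv hnadj
    have : ¬ ∀ i, a i u ≤ b i v ∧ a i v ≤ b i u := fun h => hnadj ((hiff u v huv).mpr h)
    push_neg at this
    obtain ⟨i, hi⟩ := this
    refine ⟨i, fun t ⟨⟨h1, h2⟩, h3, h4⟩ => ?_⟩
    rcases le_or_gt (a i u) (b i v) with hc | hc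
    · have := hi hc; omega
    · omega

lemma setB_to_box {k : ℕ} (B : Fin k → Type) (bF : ∀ i, Fintype (B i))
    (T : ∀ i, SimpleGraph (B i)) (β : ∀ i, B i → Set V)
    (hdec : ∀ i, IsTreeDecomp G (T i) (β i) ∧ IsPathGraph (T i))
    (hsep : ∀ u v : V, u ≠ v → ¬ G.Adj u v → ∃ i, ∀ t, ¬ (u ∈ β i t ∧ v ∈ β i t)) :
    BoxRep G k := by
  classical
  choose n he using fun i => (hdec i).2
  have e : ∀ i, T i ≃g pathGraph (n i) := fun i => (he i).some
  set F : (i : Fin k) → V → Finset (Fin (n i)) :=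
    fun i v => Finset.univ.filter (fun t => v ∈ β i ((e i).symm t)) with hF
  have hFmem : ∀ i v (t : Fin (n i)), t ∈ F i v ↔ v ∈ β i ((e i).symm t) := by
    intro i v t; simp [hF]
  have hFne : ∀ i v, (F i v).Nonempty := by
    intro i v
    obtain ⟨t0, ht0⟩ := (hdec i).1.exists_bag v
    refine ⟨e i t0, (hFmem i v _).mpr ?_⟩
    simpa using ht0
  -- interval property
  have hint : ∀ i v (t : Fin (n i)), ((F i v).min' (hFne i v)).val ≤ t.val →
      t.val ≤ ((F i v).max' (hFne i v)).val → t ∈ F i v := by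
    intro i v t h1 h2
    have himg : (e i) '' {t | v ∈ β i t} = {t' : Fin (n i) | v ∈ β i ((e i).symm t')} := by
      ext t'
      constructor
      · rintro ⟨t, ht, rfl⟩; simpa using ht
      · intro ht; exact ⟨(e i).symm t', ht, by simp⟩
    have hconn := connected_induce_image (e i) _ ((hdec i).1.support_connected v)
    rw [himg] at hconn
    set s : Set (Fin (n i)) := {t' : Fin (n i) | v ∈ β i ((e i).symm t')} with hs
    have hm : ((F i v).min' (hFne i v)) ∈ s := (hFmem i v _).mp ((F i v).min'_mem (hFne i v))
    have hM : ((F i v).max' (hFne i v)) ∈ s := (hFmem i v _).mp ((F i v).max'_mem (hFne i v))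
    obtain ⟨W⟩ := hconn.preconnected ⟨_, hm⟩ ⟨_, hM⟩
    have hmem := pg_iv (W.map (Embedding.induce s).toHom) t h1 h2
    rw [Walk.support_map] at hmem
    obtain ⟨x, hx, hxt⟩ := List.mem_map.mp hmem
    rw [hFmem]
    have hxs : (x : Fin (n i)) ∈ s := x.2
    have hxt' : (x : Fin (n i)) = t := hxt
    rw [← hxt']
    exact hxs
  refine ⟨fun i => n i, fun i v => ((F i v).min' (hFne i v)).val,
    fun i v => ((F i v).max' (hFne i v)).val, ?_, ?_⟩
  · intro i v
    refine ⟨?_, ((F i v).max' (hFne i v)).isLt⟩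
    exact Fin.le_def.mp (Finset.min'_le _ _ ((F i v).max'_mem (hFne i v)))
  · intro u v huv
    constructor
    · intro hadj i
      obtain ⟨t, htu, htv⟩ := (hdec i).1.adj_bag hadj
      have h1 : e i t ∈ F i u := (hFmem i u _).mpr (by simpa using htu)
      have h2 : e i t ∈ F i v := (hFmem i v _).mpr (by simpa using htv)
      have h3 := Fin.le_def.mp (Finset.min'_le (F i u) _ h1)
      have h4 := Fin.le_def.mp (Finset.le_max' (F i u) _ h1)
      have h5 := Fin.le_def.mp (Finset.min'_le (F i v) _ h2)
      have h6 := Fin.le_def.mp (Finset.le_max' (F i v) _ h2)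
      constructor
      · show ((F i u).min' (hFne i u)).val ≤ ((F i v).max' (hFne i v)).val
        omega
      · show ((F i v).min' (hFne i v)).val ≤ ((F i u).max' (hFne i u)).val
        omega
    · intro h
      by_contra hnadj
      obtain ⟨i, hi⟩ := hsep u v huv hnadj
      have h1 : ((F i u).min' (hFne i u)).val ≤ ((F i v).max' (hFne i v)).val := (h i).1
      have h2 : ((F i v).min' (hFne i v)).val ≤ ((F i u).max' (hFne i u)).val := (h i).2
      have hmMu := Fin.le_def.mp (Finset.min'_le (F i u) _ ((F i u).max'_mem (hFne i u)))
      have hmMv := Fin.le_def.mp (Finset.min'_le (F i v) _ ((F i v).max'_mem (hFne i v)))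
      have hMu := ((F i u).max' (hFne i u)).isLt
      have hMv := ((F i v).max' (hFne i v)).isLt
      set t : Fin (n i) := ⟨max ((F i u).min' (hFne i u)).val ((F i v).min' (hFne i v)).val,
        by omega⟩ with ht
      have htu : t ∈ F i u := hint i u t (Nat.le_max_left _ _)
        (show max ((F i u).min' (hFne i u)).val ((F i v).min' (hFne i v)).val ≤
          ((F i u).max' (hFne i u)).val by omega)
      have htv : t ∈ F i v := hint i v t (Nat.le_max_right _ _)
        (show max ((F i u).min' (hFne i u)).val ((F i v).min' (hFne i v)).val ≤
          ((F i v).max' (hFne i v)).val by omega)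
      exact hi ((e i).symm t) ⟨(hFmem i u t).mp htu, (hFmem i v t).mp htv⟩

/-- Box-filling: a convex set in a box product contains any point whose coordinates
are attained by members of the set. -/
lemma convex_fill {k : ℕ} {B : Fin k → Type} {T : ∀ i, SimpleGraph (B i)}
    (hc : ∀ i, (T i).Connected) {S : Set (∀ i, B i)} (hne : S.Nonempty)
    (hconv : GeoConvex (boxProdPi T) S) (p : ∀ i, B i)
    (h : ∀ i, ∃ x ∈ S, x i = p i) : p ∈ S := by
  classical
  have aux : ∀ m : ℕ, ∃ y ∈ S, ∀ i : Fin k, i.val < m → y i = p i := by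
    intro m
    induction m with
    | zero => exact ⟨hne.some, hne.some_mem, fun i hi => absurd hi (by omega)⟩
    | succ m ih =>
      obtain ⟨y, hy, hyp⟩ := ih
      by_cases hm : m < k
      · obtain ⟨x, hx, hxp⟩ := h ⟨m, hm⟩
        set z := Function.update y ⟨m, hm⟩ (x ⟨m, hm⟩) with hz
        have hzS : z ∈ S := by
          refine hconv y hy x hx ?_
          rw [bpp_geoInterval hc]
          intro j
          by_cases hj : j = ⟨m, hm⟩
          · subst hj
            rw [hz, Function.update_self, dist_self, add_zero]
          · rw [hz, Function.update_of_ne hj, dist_self, zero_add]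
        refine ⟨z, hzS, fun i hi => ?_⟩
        by_cases hj : i = ⟨m, hm⟩
        · subst hj
          rw [hz, Function.update_self, hxp]
        · have : i.val < m := by
            rcases Nat.lt_succ_iff_lt_or_eq.mp hi with h | h
            · exact h
            · exact absurd (Fin.ext h) hj
          rw [hz, Function.update_of_ne hj]
          exact hyp i this
      · refine ⟨y, hy, fun i hi => hyp i ?_⟩
        have := i.isLt
        omega
  obtain ⟨y, hy, hyp⟩ := aux k
  have : y = p := funext (fun i => hyp i i.isLt)
  rwa [← this]

lemma setC_to_box {k : ℕ} [Fintype V] (B : Fin k → Type) (bF : ∀ i, Fintype (B i))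
    (T : ∀ i, SimpleGraph (B i)) (S : V → Set (∀ i, B i))
    (hpath : ∀ i, IsPathGraph (T i))
    (hS : ∀ v : V, (S v).Nonempty ∧ GeoConvex (boxProdPi T) (S v))
    (hadj : ∀ u v : V, u ≠ v → (G.Adj u v ↔ (S u ∩ S v).Nonempty)) :
    BoxRep G k := by
  classical
  by_cases hV : IsEmpty V
  · exact ⟨fun _ => 1, fun _ _ => 0, fun _ _ => 0,
      fun i v => (hV.false v).elim, fun u v _ => (hV.false u).elim⟩
  rw [not_isEmpty_iff] at hV
  obtain ⟨v0⟩ := hV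
  obtain ⟨x0, hx0⟩ := (hS v0).1
  choose n he using hpath
  have e : ∀ i, T i ≃g pathGraph (n i) := fun i => (he i).some
  have hn : ∀ i, 0 < n i := fun i => (e i (x0 i)).pos
  have hc : ∀ i, (T i).Connected := by
    intro i
    rw [(e i).connected_iff]
    have h1 : n i = (n i - 1) + 1 := by have := hn i; omega
    rw [h1]
    exact pathGraph_connected _
  set val : (i : Fin k) → B i → ℕ := fun i t => (e i t).val with hval
  have hdist : ∀ i (p q : B i), (T i).dist p q = Nat.dist (val i p) (val i q) := by
    intro i p q
    rw [← iso_dist (e i) p q, pg_dist]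
  have hvalinj : ∀ i (p q : B i), val i p = val i q → p = q := by
    intro i p q h
    exact (e i).injective (Fin.ext h)
  have hvallt : ∀ i (p : B i), val i p < n i := fun i p => (e i p).isLt
  -- projections
  set Fp : (i : Fin k) → V → Finset ℕ :=
    fun i v => ((S v).toFinite.toFinset).image (fun x => val i (x i)) with hFp
  have hFpne : ∀ i v, (Fp i v).Nonempty := by
    intro i v
    obtain ⟨x, hx⟩ := (hS v).1
    exact ⟨val i (x i), Finset.mem_image.mpr ⟨x, (Set.Finite.mem_toFinset _).mpr hx, rfl⟩⟩
  have hFpmem : ∀ i v r, r ∈ Fp i v ↔ ∃ x ∈ S v, val i (x i) = r := by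
    intro i v r
    simp only [hFp, Finset.mem_image, Set.Finite.mem_toFinset]
  -- interval property of projections
  have hFull : ∀ i (v : V) (r : ℕ), ((Fp i v).min' (hFpne i v)) ≤ r →
      r ≤ ((Fp i v).max' (hFpne i v)) → ∃ x ∈ S v, val i (x i) = r := by
    intro i v r h1 h2
    obtain ⟨p, hp, hpv⟩ := (hFpmem i v _).mp ((Fp i v).min'_mem (hFpne i v))
    obtain ⟨q, hq, hqv⟩ := (hFpmem i v _).mp ((Fp i v).max'_mem (hFpne i v))
    have hrlt : r < n i := by
      have := hvallt i (q i)
      omega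
    set t : B i := (e i).symm ⟨r, hrlt⟩ with ht
    have hvt : val i t = r := by
      rw [hval, ht]
      simp
    refine ⟨Function.update p i t, ?_, by rw [Function.update_self, hvt]⟩
    refine (hS v).2 p hp q hq ?_
    rw [bpp_geoInterval hc]
    intro j
    by_cases hj : j = i
    · subst hj
      rw [Function.update_self, hdist, hdist, hdist, hpv, hqv, hvt,
        nat_dist_eq, nat_dist_eq, nat_dist_eq]
      omega
    · rw [Function.update_of_ne hj, SimpleGraph.dist_self, zero_add]
  refine ⟨n, fun i v => ((Fp i v).min' (hFpne i v)), fun i v => ((Fp i v).max' (hFpne i v)),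
    ?_, ?_⟩
  · intro i v
    refine ⟨Finset.min'_le _ _ ((Fp i v).max'_mem (hFpne i v)), ?_⟩
    obtain ⟨x, hx, hxv⟩ := (hFpmem i v _).mp ((Fp i v).max'_mem (hFpne i v))
    show (Fp i v).max' (hFpne i v) < n i
    rw [← hxv]
    exact hvallt i (x i)
  · intro u v huv
    rw [hadj u v huv]
    constructor
    · rintro ⟨x, hxu, hxv⟩ i
      have h1 : val i (x i) ∈ Fp i u := (hFpmem i u _).mpr ⟨x, hxu, rfl⟩
      have h2 : val i (x i) ∈ Fp i v := (hFpmem i v _).mpr ⟨x, hxv, rfl⟩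
      exact ⟨le_trans (Finset.min'_le _ _ h1) (Finset.le_max' _ _ h2),
        le_trans (Finset.min'_le _ _ h2) (Finset.le_max' _ _ h1)⟩
    · intro h
      -- common coordinates
      have hr : ∀ i, ∃ r : ℕ, (∃ x ∈ S u, val i (x i) = r) ∧ (∃ y ∈ S v, val i (y i) = r) := by
        intro i
        set r := max ((Fp i u).min' (hFpne i u)) ((Fp i v).min' (hFpne i v)) with hrdef
        have hmu := Finset.min'_le _ _ ((Fp i u).max'_mem (hFpne i u))
        have hmv := Finset.min'_le _ _ ((Fp i v).max'_mem (hFpne i v))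
        have h1 : (Fp i u).min' (hFpne i u) ≤ (Fp i v).max' (hFpne i v) := (h i).1
        have h2 : (Fp i v).min' (hFpne i v) ≤ (Fp i u).max' (hFpne i u) := (h i).2
        refine ⟨r, hFull i u r (le_max_left _ _) (by omega), hFull i v r (le_max_right _ _)
          (by omega)⟩
      choose r hru hrv using hr
      choose x hx hxr using hru
      choose y hy hyr using hrv
      have hxy : ∀ i, x i i = y i i := by
        intro i
        apply hvalinj
        rw [hxr i, hyr i]
      refine ⟨fun i => x i i, ?_, ?_⟩
      · exact convex_fill hc (hS u).1 (hS u).2 _ (fun i => ⟨x i, hx i, rfl⟩)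
      · refine convex_fill hc (hS v).1 (hS v).2 _ (fun i => ⟨y i, hy i, ?_⟩)
        exact (hxy i).symm

lemma box_to_setC {k : ℕ} (hV : Nonempty V) (hbox : BoxRep G k) :
    ∃ (B : Fin k → Type) (_ : ∀ i, Fintype (B i))
      (T : ∀ i, SimpleGraph (B i)) (S : V → Set (∀ i, B i)),
      (∀ i, IsPathGraph (T i)) ∧
      (∀ v : V, (S v).Nonempty ∧ GeoConvex (boxProdPi T) (S v)) ∧
      ∀ u v : V, u ≠ v → (G.Adj u v ↔ (S u ∩ S v).Nonempty) := by
  obtain ⟨N, a, b, hab, hiff⟩ := hbox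
  obtain ⟨v0⟩ := hV
  have hN : ∀ i, 0 < N i := fun i => by have := hab i v0; omega
  have hc : ∀ i, (pathGraph (N i)).Connected := by
    intro i
    have : N i = (N i - 1) + 1 := by have := hN i; omega
    rw [this]
    exact pathGraph_connected _
  refine ⟨fun i => Fin (N i), fun i => inferInstance, fun i => pathGraph (N i),
    fun v => {x | ∀ i, a i v ≤ (x i).val ∧ (x i).val ≤ b i v}, fun i => ⟨N i, ⟨Iso.refl⟩⟩,
    ?_, ?_⟩
  · intro v
    constructor
    · exact ⟨fun i => ⟨a i v, by have := hab i v; omega⟩, fun i => ⟨le_refl _, (hab i v).1⟩⟩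
    · intro p hp q hq x hx
      rw [bpp_geoInterval hc] at hx
      intro i
      have h := hx i
      rw [pg_dist, pg_dist, pg_dist, nat_dist_eq, nat_dist_eq, nat_dist_eq] at h
      have h1 := hp i
      have h2 := hq i
      omega
  · intro u v huv
    rw [hiff u v huv]
    constructor
    · intro h
      refine ⟨fun i => ⟨max (a i u) (a i v), ?_⟩, fun i => ⟨?_, ?_⟩, fun i => ⟨?_, ?_⟩⟩
      · have h1 := hab i u; have h2 := hab i v; have h3 := h i; simp; omega
      · simp
      · have h1 := hab i u; have h3 := h i; simp; omega
      · simp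
      · have h2 := hab i v; have h3 := h i; simp; omega
    · rintro ⟨x, hxu, hxv⟩ i
      have h1 := hxu i
      have h2 := hxv i
      exact ⟨by omega, by omega⟩

end Stmt10


/-- For a finite graph with at least one non-edge, the boxicity (minimum
number of interval graphs whose intersection is `G`) equals the minimum cardinality of a
non-edge-separating family of path-decompositions of `G`, and equals the minimum `k` such
that `G` is the intersection graph of nonempty convex sets of a Cartesian product of
`k` paths. -/
theorem stmt_10 {V : Type} [Fintype V] (G : SimpleGraph V)
    (hne : ∃ u v : V, u ≠ v ∧ ¬ G.Adj u v) :
    sInf {k | 0 < k ∧ ∃ H : Fin k → SimpleGraph V, (∀ i, IntervalGraph (H i)) ∧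
        ∀ u v : V, G.Adj u v ↔ ∀ i, (H i).Adj u v} =
      sInf {k | ∃ (B : Fin k → Type) (_ : ∀ i, Fintype (B i))
        (T : ∀ i, SimpleGraph (B i)) (β : ∀ i, B i → Set V),
        (∀ i, IsTreeDecomp G (T i) (β i) ∧ IsPathGraph (T i)) ∧
        ∀ u v : V, u ≠ v → ¬ G.Adj u v →
          ∃ i, ∀ t, ¬ (u ∈ β i t ∧ v ∈ β i t)} ∧
    sInf {k | ∃ (B : Fin k → Type) (_ : ∀ i, Fintype (B i))
        (T : ∀ i, SimpleGraph (B i)) (β : ∀ i, B i → Set V),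
        (∀ i, IsTreeDecomp G (T i) (β i) ∧ IsPathGraph (T i)) ∧
        ∀ u v : V, u ≠ v → ¬ G.Adj u v →
          ∃ i, ∀ t, ¬ (u ∈ β i t ∧ v ∈ β i t)} =
      sInf {k | 0 < k ∧ ∃ (B : Fin k → Type) (_ : ∀ i, Fintype (B i))
        (T : ∀ i, SimpleGraph (B i)) (S : V → Set (∀ i, B i)),
        (∀ i, IsPathGraph (T i)) ∧
        (∀ v : V, (S v).Nonempty ∧ GeoConvex (boxProdPi T) (S v)) ∧
        ∀ u v : V, u ≠ v → (G.Adj u v ↔ (S u ∩ S v).Nonempty)} := by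
  have hV : Nonempty V := ⟨hne.choose⟩
  have hA : {k | 0 < k ∧ ∃ H : Fin k → SimpleGraph V, (∀ i, IntervalGraph (H i)) ∧
      ∀ u v : V, G.Adj u v ↔ ∀ i, (H i).Adj u v} = {k | 0 < k ∧ Stmt10.BoxRep G k} := by
    ext k
    simp only [Set.mem_setOf_eq]
    constructor
    · rintro ⟨hk, H, hint, hiff⟩
      exact ⟨hk, Stmt10.setA_to_box H hint hiff⟩
    · rintro ⟨hk, hbox⟩
      exact ⟨hk, Stmt10.box_to_setA hk hbox⟩
  have hB : {k | ∃ (B : Fin k → Type) (_ : ∀ i, Fintype (B i))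
      (T : ∀ i, SimpleGraph (B i)) (β : ∀ i, B i → Set V),
      (∀ i, IsTreeDecomp G (T i) (β i) ∧ IsPathGraph (T i)) ∧
      ∀ u v : V, u ≠ v → ¬ G.Adj u v →
        ∃ i, ∀ t, ¬ (u ∈ β i t ∧ v ∈ β i t)} = {k | 0 < k ∧ Stmt10.BoxRep G k} := by
    ext k
    simp only [Set.mem_setOf_eq]
    constructor
    · rintro ⟨B, bF, T, β, hdec, hsep⟩
      refine ⟨?_, Stmt10.setB_to_box B bF T β hdec hsep⟩
      by_contra hk
      obtain ⟨u, v, huv, hnadj⟩ := hne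
      obtain ⟨i, -⟩ := hsep u v huv hnadj
      rw [Nat.pos_iff_ne_zero, not_not] at hk
      subst hk
      exact i.elim0
    · rintro ⟨hk, hbox⟩
      exact Stmt10.box_to_setB hV hbox
  have hC : {k | 0 < k ∧ ∃ (B : Fin k → Type) (_ : ∀ i, Fintype (B i))
      (T : ∀ i, SimpleGraph (B i)) (S : V → Set (∀ i, B i)),
      (∀ i, IsPathGraph (T i)) ∧
      (∀ v : V, (S v).Nonempty ∧ GeoConvex (boxProdPi T) (S v)) ∧
      ∀ u v : V, u ≠ v → (G.Adj u v ↔ (S u ∩ S v).Nonempty)} =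
      {k | 0 < k ∧ Stmt10.BoxRep G k} := by
    ext k
    simp only [Set.mem_setOf_eq]
    constructor
    · rintro ⟨hk, B, bF, T, S, hpath, hS, hadj⟩
      exact ⟨hk, Stmt10.setC_to_box B bF T S hpath hS hadj⟩
    · rintro ⟨hk, hbox⟩
      exact ⟨hk, Stmt10.box_to_setC hV hbox⟩
  rw [hA, hB, hC]
  exact ⟨rfl, rfl⟩
end

section
/- Let k₁ and k₂ be positive integers, and let G₁ and G₂ be chordal graphs on a common vertex set such that for each i ∈ {1,2} the graph G_i has a representation (T_i,β_i) with pw(T_i) ≤ k_i. If G = G₁ ∩ G₂, then there exists a partition P of V(G) with |P| ≤ (k₁+1)(k₂+1) such that for every part V ∈ P, the induced subgraph G[V] is the intersection of two interval graphs on V (i.e., G[V] has boxicity at most two). -/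
open SimpleGraph

namespace Stmt15Aux

variable {B : Type} {T : SimpleGraph B}

def Conn (T : SimpleGraph B) (S : Set B) : Prop :=
  ∀ x ∈ S, ∀ y ∈ S, ∃ w : T.Walk x y, ∀ z ∈ w.support, z ∈ S

lemma conn_of_induce_connected {G : SimpleGraph B} {S : Set B}
    (h : (G.induce S).Connected) : Conn G S := by
  intro x hx y hy
  obtain ⟨w⟩ := h.preconnected ⟨x, hx⟩ ⟨y, hy⟩
  let f : G.induce S →g G := ⟨Subtype.val, fun {a b} hab => hab⟩
  refine ⟨w.map f, ?_⟩
  intro z hz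
  rw [Walk.support_map] at hz
  obtain ⟨z', _, rfl⟩ := List.mem_map.1 hz
  exact z'.2


noncomputable def thePath (hT : T.IsTree) (x y : B) : T.Walk x y :=
  (hT.existsUnique_path x y).exists.choose

lemma thePath_isPath (hT : T.IsTree) (x y : B) : (thePath hT x y).IsPath :=
  (hT.existsUnique_path x y).exists.choose_spec

lemma thePath_eq (hT : T.IsTree) {x y : B} (p : T.Walk x y) (hp : p.IsPath) :
    p = thePath hT x y := by
  obtain ⟨q, _, hq⟩ := hT.existsUnique_path x y
  rw [hq p hp, hq _ (thePath_isPath hT x y)]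

lemma thePath_subset (hT : T.IsTree) {S : Set B} (hS : Conn T S) {x y : B}
    (hx : x ∈ S) (hy : y ∈ S) : ∀ z ∈ (thePath hT x y).support, z ∈ S := by
  classical
  obtain ⟨w, hw⟩ := hS x hx y hy
  have hb : w.bypass = thePath hT x y := thePath_eq hT _ (Walk.bypass_isPath w)
  intro z hz
  rw [← hb] at hz
  exact hw z (Walk.support_bypass_subset _ hz)


/-- The subsegment of a path between positions `i ≤ j`. -/
lemma seg : ∀ {u v : B} (p : T.Walk u v), p.IsPath → ∀ i j : ℕ, i ≤ j → j ≤ p.length →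
    ∃ q : T.Walk (p.getVert i) (p.getVert j), q.IsPath ∧
      (∀ z, z ∈ q.support ↔ ∃ m, i ≤ m ∧ m ≤ j ∧ z = p.getVert m) := by
  intro u v p
  induction p with
  | nil =>
    intro _ i j hij hj
    simp only [Walk.length_nil, Nat.le_zero] at hj
    subst hj
    simp only [Nat.le_zero] at hij
    subst hij
    refine ⟨Walk.nil, Walk.IsPath.nil, ?_⟩
    intro z
    simp only [Walk.support_nil, List.mem_singleton, Walk.getVert_zero]
    constructor
    · rintro rfl; exact ⟨0, le_refl _, le_refl _, rfl⟩
    · rintro ⟨m, hm0, hm0', rfl⟩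
      rfl
  | cons h q ih =>
    intro hp i j hij hj
    rename_i u' v' w'
    have hq : q.IsPath := hp.of_cons
    have hu : u' ∉ q.support := ((Walk.cons_isPath_iff h q).1 hp).2
    match i, j with
    | 0, 0 =>
      refine ⟨Walk.nil.copy (Walk.getVert_zero _).symm (Walk.getVert_zero _).symm, by simp, ?_⟩
      intro z
      simp only [Walk.support_copy, Walk.support_nil, List.mem_singleton, Walk.getVert_zero]
      constructor
      · rintro rfl; exact ⟨0, le_refl _, le_refl _, (Walk.getVert_zero _).symm⟩
      · rintro ⟨m, _, hm, rfl⟩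
        interval_cases m
        simp [Walk.getVert_zero]
    | 0, j+1 =>
      have hjq : j ≤ q.length := by simpa [Walk.length_cons] using hj
      obtain ⟨q', hq', hsupp⟩ := ih hq 0 j (Nat.zero_le _) hjq
      have e1 : q.getVert 0 = v' := Walk.getVert_zero _
      refine ⟨(Walk.cons h (q'.copy e1 rfl)).copy (Walk.getVert_zero _).symm
        (by rw [Walk.getVert_cons_succ]), ?_, ?_⟩
      · rw [Walk.isPath_copy]
        rw [Walk.cons_isPath_iff]
        refine ⟨by simpa using hq', ?_⟩
        intro hmem
        rw [Walk.support_copy] at hmem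
        obtain ⟨m, _, hm2, rfl⟩ := (hsupp _).1 hmem
        exact hu (Walk.mem_support_iff_exists_getVert.2 ⟨m, rfl, le_trans hm2 hjq⟩)
      · intro z
        rw [Walk.support_copy, Walk.support_cons, Walk.support_copy]
        simp only [List.mem_cons]
        constructor
        · rintro (rfl | hz)
          · exact ⟨0, le_refl _, Nat.zero_le _, (Walk.getVert_zero _).symm⟩
          · obtain ⟨m, _, hm2, rfl⟩ := (hsupp _).1 hz
            exact ⟨m+1, Nat.zero_le _, by omega, (Walk.getVert_cons_succ _ _).symm⟩
        · rintro ⟨m, _, hm2, rfl⟩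
          match m with
          | 0 => left; exact Walk.getVert_zero _
          | m+1 =>
            right
            rw [Walk.getVert_cons_succ]
            exact (hsupp _).2 ⟨m, Nat.zero_le _, by omega, rfl⟩
    | i+1, j+1 =>
      have hjq : j ≤ q.length := by simpa [Walk.length_cons] using hj
      obtain ⟨q', hq', hsupp⟩ := ih hq i j (by omega) hjq
      refine ⟨q'.copy (Walk.getVert_cons_succ _ _).symm (Walk.getVert_cons_succ _ _).symm,
        by simpa using hq', ?_⟩
      intro z
      rw [Walk.support_copy]
      constructor
      · intro hz
        obtain ⟨m, hm1, hm2, rfl⟩ := (hsupp _).1 hz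
        exact ⟨m+1, by omega, by omega, (Walk.getVert_cons_succ _ _).symm⟩
      · rintro ⟨m, hm1, hm2, rfl⟩
        match m with
        | m+1 =>
          rw [Walk.getVert_cons_succ]
          exact (hsupp _).2 ⟨m, by omega, by omega, rfl⟩


variable {u' w' : B} {Q : T.Walk u' w'}

lemma qconn (hQ : Q.IsPath) : Conn T {z | z ∈ Q.support} := by
  intro x hx y hy
  obtain ⟨i, hi, hil⟩ := Walk.mem_support_iff_exists_getVert.1 hx
  obtain ⟨j, hj, hjl⟩ := Walk.mem_support_iff_exists_getVert.1 hy
  rcases le_total i j with hij | hij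
  · obtain ⟨q, _, hsupp⟩ := seg Q hQ i j hij hjl
    refine ⟨q.copy hi hj, ?_⟩
    intro z hz
    rw [Walk.support_copy] at hz
    obtain ⟨m, _, hm2, rfl⟩ := (hsupp _).1 hz
    exact Walk.mem_support_iff_exists_getVert.2 ⟨m, rfl, le_trans hm2 hjl⟩
  · obtain ⟨q, _, hsupp⟩ := seg Q hQ j i hij hil
    refine ⟨(q.copy hj hi).reverse, ?_⟩
    intro z hz
    rw [Walk.support_reverse, List.mem_reverse, Walk.support_copy] at hz
    obtain ⟨m, _, hm2, rfl⟩ := (hsupp _).1 hz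
    exact Walk.mem_support_iff_exists_getVert.2 ⟨m, rfl, le_trans hm2 hil⟩

lemma gate (hT : T.IsTree) (hQ : Q.IsPath) {S : Set B} (hS : Conn T S) {x p : B}
    (hx : x ∈ S) (hpS : p ∈ S) (hpQ : p ∈ Q.support) :
    ∃ g, g ∈ S ∧ g ∈ Q.support ∧ ∀ q, q ∈ Q.support → g ∈ (thePath hT x q).support := by
  set π := thePath hT x p with hπdef
  have hπ : π.IsPath := thePath_isPath hT x p
  have hπS : ∀ z ∈ π.support, z ∈ S := thePath_subset hT hS hx hpS
  set J : Set ℕ := {i | i ≤ π.length ∧ π.getVert i ∈ Q.support} with hJdef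
  have hJne : J.Nonempty := ⟨π.length, le_refl _, by rw [Walk.getVert_length]; exact hpQ⟩
  set j := sInf J with hjdef
  have hjJ : j ∈ J := Nat.sInf_mem hJne
  refine ⟨π.getVert j, hπS _ (Walk.mem_support_iff_exists_getVert.2 ⟨j, rfl, hjJ.1⟩), hjJ.2, ?_⟩
  intro q hq
  obtain ⟨σ, hσp, hσsupp⟩ := seg π hπ 0 j (Nat.zero_le _) hjJ.1
  set σ' := σ.copy (Walk.getVert_zero π) rfl with hσ'def
  set τ := thePath hT (π.getVert j) q with hτdef
  have hτp : τ.IsPath := thePath_isPath hT _ _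
  have hτQ : ∀ z ∈ τ.support, z ∈ {z | z ∈ Q.support} :=
    thePath_subset hT (qconn hQ) hjJ.2 hq
  have hW : (σ'.append τ).IsPath := by
    apply Walk.IsPath.mk'
    rw [Walk.support_append, List.nodup_append]
    refine ⟨by rw [hσ'def, Walk.support_copy]; exact hσp.support_nodup,
      hτp.support_nodup.tail, ?_⟩
    intro z hz1 z' hz2 hzz'
    subst hzz'
    have hzQ : z ∈ Q.support := hτQ z (List.mem_of_mem_tail hz2)
    rw [hσ'def, Walk.support_copy] at hz1
    obtain ⟨m, _, hm2, rfl⟩ := (hσsupp _).1 hz1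
    have : m ∈ J := ⟨le_trans hm2 hjJ.1, hzQ⟩
    have hjm : j = m := le_antisymm (Nat.sInf_le this) hm2
    subst hjm
    have : τ.support = π.getVert j :: τ.support.tail := Walk.support_eq_cons τ
    have hnd := hτp.support_nodup
    rw [this] at hnd
    exact (List.nodup_cons.1 hnd).1 hz2
  have hWeq : σ'.append τ = thePath hT x q := thePath_eq hT _ hW
  rw [← hWeq, Walk.mem_support_append_iff]
  left
  rw [hσ'def, Walk.support_copy]
  exact (hσsupp _).2 ⟨j, Nat.zero_le _, le_refl _, rfl⟩


def idxSet {u' w' : B} (Q : T.Walk u' w') (S : Set B) : Set ℕ :=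
  {i | i ≤ Q.length ∧ Q.getVert i ∈ S}

lemma idxSet_nonempty {S : Set B} (h : ∃ z ∈ S, z ∈ Q.support) : (idxSet Q S).Nonempty := by
  obtain ⟨z, hzS, hzQ⟩ := h
  obtain ⟨i, rfl, hil⟩ := Walk.mem_support_iff_exists_getVert.1 hzQ
  exact ⟨i, hil, hzS⟩

lemma idxSet_bdd {S : Set B} : BddAbove (idxSet Q S) := ⟨Q.length, fun _ hi => hi.1⟩

lemma getVert_mem_of_between (hT : T.IsTree) (hQ : Q.IsPath) {S : Set B} (hS : Conn T S)
    (hne : ∃ z ∈ S, z ∈ Q.support) {i : ℕ}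
    (h1 : sInf (idxSet Q S) ≤ i) (h2 : i ≤ sSup (idxSet Q S)) : Q.getVert i ∈ S := by
  have hne' := idxSet_nonempty hne
  have hinf : sInf (idxSet Q S) ∈ idxSet Q S := Nat.sInf_mem hne'
  have hsup : sSup (idxSet Q S) ∈ idxSet Q S := Nat.sSup_mem hne' idxSet_bdd
  obtain ⟨q, hqp, hsupp⟩ := seg Q hQ _ _ (le_trans h1 h2) hsup.1
  have : q = thePath hT _ _ := thePath_eq hT q hqp
  have hmem : Q.getVert i ∈ q.support := (hsupp _).2 ⟨i, h1, h2, rfl⟩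
  rw [this] at hmem
  exact thePath_subset hT hS hinf.2 hsup.2 _ hmem

lemma class0_iff (hT : T.IsTree) (hQ : Q.IsPath) {S₁ S₂ : Set B}
    (h₁ : Conn T S₁) (h₂ : Conn T S₂)
    (ne₁ : ∃ z ∈ S₁, z ∈ Q.support) (ne₂ : ∃ z ∈ S₂, z ∈ Q.support) :
    (S₁ ∩ S₂).Nonempty ↔
      (sInf (idxSet Q S₁) ≤ sSup (idxSet Q S₂) ∧ sInf (idxSet Q S₂) ≤ sSup (idxSet Q S₁)) := by
  constructor
  · rintro ⟨x, hx₁, hx₂⟩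
    obtain ⟨p, hpS, hpQ⟩ := ne₁
    obtain ⟨g, hgS₁, hgQ, hgpath⟩ := gate hT hQ h₁ hx₁ hpS hpQ
    obtain ⟨q, hqS, hqQ⟩ := ne₂
    have hgS₂ : g ∈ S₂ := thePath_subset hT h₂ hx₂ hqS _ (hgpath q hqQ)
    obtain ⟨m, rfl, hml⟩ := Walk.mem_support_iff_exists_getVert.1 hgQ
    have hm₁ : m ∈ idxSet Q S₁ := ⟨hml, hgS₁⟩
    have hm₂ : m ∈ idxSet Q S₂ := ⟨hml, hgS₂⟩
    exact ⟨le_trans (Nat.sInf_le hm₁) (le_csSup idxSet_bdd hm₂),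
      le_trans (Nat.sInf_le hm₂) (le_csSup idxSet_bdd hm₁)⟩
  · rintro ⟨h12, h21⟩
    rcases le_total (sInf (idxSet Q S₁)) (sInf (idxSet Q S₂)) with h | h
    · set i := sInf (idxSet Q S₂)
      have hi₂ : Q.getVert i ∈ S₂ := (Nat.sInf_mem (idxSet_nonempty ne₂)).2
      have hi₁ : Q.getVert i ∈ S₁ := getVert_mem_of_between hT hQ h₁ ne₁ h h21
      exact ⟨_, hi₁, hi₂⟩
    · set i := sInf (idxSet Q S₁)
      have hi₁ : Q.getVert i ∈ S₁ := (Nat.sInf_mem (idxSet_nonempty ne₁)).2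
      have hi₂ : Q.getVert i ∈ S₂ := getVert_mem_of_between hT hQ h₂ ne₂ h h12
      exact ⟨_, hi₁, hi₂⟩

lemma idx_le (hne : ∃ z ∈ S, z ∈ Q.support) : sInf (idxSet Q S) ≤ sSup (idxSet Q S) :=
  le_csSup idxSet_bdd (Nat.sInf_mem (idxSet_nonempty hne))


lemma main {V : Type} [Fintype V] [Fintype B] (hT : T.IsTree)
    (S : V → Set B) (hSne : ∀ v, (S v).Nonempty) (hSconn : ∀ v, Conn T (S v)) :
    ∀ (N : ℕ) (k : ℕ) (A : Set B) (n : ℕ) (X : ℕ → Set B),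
      A.ncard ≤ N →
      (∀ i, X i ⊆ A) → (∀ i, n ≤ i → X i = ∅) → (∀ t ∈ A, ∃ i, t ∈ X i) →
      (∀ t i j m, t ∈ X i → t ∈ X j → i ≤ m → m ≤ j → t ∈ X m) →
      (∀ s t, s ∈ A → t ∈ A → T.Adj s t → ∃ i, s ∈ X i ∧ t ∈ X i) →
      (∀ i, (X i).ncard ≤ k + 1) →
      ∃ (c : V → Fin (k+1)) (a b : V → ℕ),
        (∀ v, S v ⊆ A → a v ≤ b v) ∧
        (∀ u v, S u ⊆ A → S v ⊆ A → c u = c v →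
          ((S u ∩ S v).Nonempty ↔ (a u ≤ b v ∧ a v ≤ b u))) := by
  classical
  intro N
  induction N with
  | zero =>
    intro k A n X hN _ _ _ _ _ _
    have hA : A = ∅ := by
      rw [← Set.ncard_eq_zero (Set.toFinite A)]; omega
    subst hA
    refine ⟨fun _ => 0, fun _ => 0, fun _ => 0, ?_, ?_⟩
    · intro v hv
      obtain ⟨t, ht⟩ := hSne v
      exact absurd (hv ht) (Set.notMem_empty t)
    · intro u v hu _ _
      obtain ⟨t, ht⟩ := hSne u
      exact absurd (hu ht) (Set.notMem_empty t)
  | succ N ih =>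
    intro k A n X hN hsub hbnd hcov hint hedge hsize
    by_cases hA : A = ∅
    · subst hA
      refine ⟨fun _ => 0, fun _ => 0, fun _ => 0, ?_, ?_⟩
      · intro v hv
        obtain ⟨t, ht⟩ := hSne v
        exact absurd (hv ht) (Set.notMem_empty t)
      · intro u v hu _ _
        obtain ⟨t, ht⟩ := hSne u
        exact absurd (hu ht) (Set.notMem_empty t)
    obtain ⟨x₀, hx₀⟩ := Set.nonempty_iff_ne_empty.2 hA
    -- the component of x₀ in A
    set C : Set B := {x | ∃ w : T.Walk x₀ x, ∀ z ∈ w.support, z ∈ A} with hCdef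
    have hx₀C : x₀ ∈ C := ⟨Walk.nil, by simpa using hx₀⟩
    have hCA : C ⊆ A := by
      rintro x ⟨w, hw⟩
      exact hw x (Walk.end_mem_support w)
    have hCsub : ∀ (x : B) (w : T.Walk x₀ x), (∀ z ∈ w.support, z ∈ A) →
        ∀ z ∈ w.support, z ∈ C := by
      intro x w hw z hz
      exact ⟨w.takeUntil z hz, fun t ht => hw t (Walk.support_takeUntil_subset w hz ht)⟩
    have hCconn : Conn T C := by
      rintro x ⟨wx, hwx⟩ y ⟨wy, hwy⟩
      refine ⟨wx.reverse.append wy, ?_⟩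
      intro z hz
      rw [Walk.mem_support_append_iff, Walk.support_reverse, List.mem_reverse] at hz
      rcases hz with hz | hz
      · exact hCsub _ wx hwx z hz
      · exact hCsub _ wy hwy z hz
    have hSC : ∀ v, S v ⊆ A → (S v ∩ C).Nonempty → S v ⊆ C := by
      rintro v hvA ⟨x, hxS, wx, hwx⟩ y hyS
      obtain ⟨wxy, hwxy⟩ := hSconn v x hxS y hyS
      refine ⟨wx.append wxy, ?_⟩
      intro z hz
      rw [Walk.mem_support_append_iff] at hz
      rcases hz with hz | hz
      · exact hwx z hz
      · exact hvA (hwxy z hz)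
    -- first and last bags meeting C
    set bagC : Set ℕ := {i | (X i ∩ C).Nonempty} with hbagCdef
    have hbagCne : bagC.Nonempty := by
      obtain ⟨i, hi⟩ := hcov x₀ hx₀
      exact ⟨i, ⟨x₀, hi, hx₀C⟩⟩
    have hbagCbdd : BddAbove bagC := by
      refine ⟨n, fun i hi => ?_⟩
      by_contra h
      push_neg at h
      have : X i ∩ C = ∅ := by rw [hbnd i (le_of_lt h)]; simp
      rw [hbagCdef] at hi
      simp only [Set.mem_setOf_eq, this] at hi
      exact Set.not_nonempty_empty hi
    set ia := sInf bagC with hiadef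
    set ib := sSup bagC with hibdef
    have hiamem : ia ∈ bagC := Nat.sInf_mem hbagCne
    have hibmem : ib ∈ bagC := Nat.sSup_mem hbagCne hbagCbdd
    obtain ⟨u', hu'X, hu'C⟩ := hiamem
    obtain ⟨w', hw'X, hw'C⟩ := hibmem
    set Q : T.Walk u' w' := thePath hT u' w' with hQdef
    have hQp : Q.IsPath := thePath_isPath hT u' w'
    have hQC : ∀ z ∈ Q.support, z ∈ C := thePath_subset hT hCconn hu'C hw'C
    -- first/last bag containing a given vertex
    set fl : B → Set ℕ := fun t => {i | t ∈ X i} with hfldef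
    have hflne : ∀ t ∈ A, (fl t).Nonempty := fun t ht => hcov t ht
    have hflbdd : ∀ t, BddAbove (fl t) := by
      intro t
      refine ⟨n, fun i hi => ?_⟩
      by_contra h
      push_neg at h
      rw [hfldef] at hi
      simp only [Set.mem_setOf_eq, hbnd i (le_of_lt h)] at hi
      exact Set.notMem_empty t hi
    have hflmem : ∀ t ∈ A, ∀ i, t ∈ X i ↔ (sInf (fl t) ≤ i ∧ i ≤ sSup (fl t)) := by
      intro t ht i
      constructor
      · intro hi
        exact ⟨Nat.sInf_le hi, le_csSup (hflbdd t) hi⟩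
      · rintro ⟨h1, h2⟩
        exact hint t _ _ i (Nat.sInf_mem (hflne t ht)) (Nat.sSup_mem (hflne t ht) (hflbdd t)) h1 h2
    -- every bag meeting C meets Q
    have bag_meets_Q : ∀ i, (X i ∩ C).Nonempty → ∃ t, t ∈ Q.support ∧ t ∈ X i := by
      intro i hi
      have hiab : ia ≤ i ∧ i ≤ ib := ⟨Nat.sInf_le hi, le_csSup hbagCbdd hi⟩
      have aux : ∀ (y z : B) (w : T.Walk y z), (∀ t ∈ w.support, t ∈ Q.support) →
          sSup (fl y) < i → (∃ t, t ∈ Q.support ∧ t ∈ X i) ∨ sSup (fl z) < i := by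
        intro y z w
        induction w with
        | nil => intro _ h; exact Or.inr h
        | @cons y y₂ w₂ hadj rest ihw =>
          intro hsupp hly
          have hyA : y ∈ A := hCA (hQC _ (hsupp _ (Walk.start_mem_support _)))
          have hy₂Q : y₂ ∈ Q.support := by
            apply hsupp
            rw [Walk.support_cons]
            exact List.mem_cons_of_mem _ (Walk.start_mem_support _)
          have hy₂A : y₂ ∈ A := hCA (hQC _ hy₂Q)
          obtain ⟨j, hyj, hy₂j⟩ := hedge y y₂ hyA hy₂A hadj
          have hjl : j ≤ sSup (fl y) := le_csSup (hflbdd y) hyj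
          have hfy₂ : sInf (fl y₂) ≤ j := Nat.sInf_le hy₂j
          by_cases hcase : sSup (fl y₂) < i
          · refine ihw ?_ hcase
            intro z hz
            apply hsupp
            rw [Walk.support_cons]
            exact List.mem_cons_of_mem _ hz
          · push_neg at hcase
            refine Or.inl ⟨y₂, hy₂Q, ?_⟩
            rw [hflmem y₂ hy₂A i]
            exact ⟨by omega, hcase⟩
      by_cases hstart : sSup (fl u') < i
      · rcases aux u' w' Q (fun z hz => hz) hstart with h | h
        · exact h
        · exfalso
          have : ib ≤ sSup (fl w') := le_csSup (hflbdd w') hw'X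
          omega
      · push_neg at hstart
        refine ⟨u', Walk.start_mem_support _, ?_⟩
        rw [hflmem u' (hCA hu'C) i]
        have : sInf (fl u') ≤ ia := Nat.sInf_le hu'X
        exact ⟨by omega, hstart⟩
    -- recursive call 1 : C minus Q
    set Qs : Set B := {z | z ∈ Q.support} with hQsdef
    set A₁ : Set B := C \ Qs with hA₁def
    have hA₁N : A₁.ncard ≤ N := by
      have hss : A₁ ⊂ A := by
        rw [Set.ssubset_iff_of_subset (fun x hx => hCA hx.1)]
        exact ⟨u', hCA hu'C, fun h => h.2 (Walk.start_mem_support Q)⟩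
      have := Set.ncard_lt_ncard hss (Set.toFinite A)
      omega
    obtain ⟨c₁, a₁, b₁, hab₁, spec₁⟩ := ih (k-1) A₁ n (fun i => X i ∩ A₁) hA₁N
      (fun i => Set.inter_subset_right)
      (fun i hi => by show X i ∩ A₁ = ∅; rw [hbnd i hi]; simp)
      (fun t ht => by obtain ⟨i, hi⟩ := hcov t (hCA ht.1); exact ⟨i, hi, ht⟩)
      (fun t i j m h1 h2 hm1 hm2 => ⟨hint t i j m h1.1 h2.1 hm1 hm2, h1.2⟩)
      (fun s t hs ht hadj => by
        obtain ⟨i, h1, h2⟩ := hedge s t (hCA hs.1) (hCA ht.1) hadj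
        exact ⟨i, ⟨h1, hs⟩, ⟨h2, ht⟩⟩)
      (fun i => by
        show (X i ∩ A₁).ncard ≤ k - 1 + 1
        by_cases hC : (X i ∩ C).Nonempty
        · obtain ⟨t', ht'Q, ht'X⟩ := bag_meets_Q i hC
          have hsubd : X i ∩ A₁ ⊆ X i \ {t'} := by
            rintro z ⟨hz1, hz2⟩
            exact ⟨hz1, fun h => hz2.2 (by rw [Set.mem_singleton_iff] at h; rw [h]; exact ht'Q)⟩
          have h1 : (X i \ {t'}).ncard = (X i).ncard - 1 :=
            Set.ncard_diff_singleton_of_mem ht'X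
          have h2 := Set.ncard_le_ncard hsubd (Set.toFinite _)
          have h3 := hsize i
          omega
        · have hempty : X i ∩ A₁ = ∅ := by
            rw [Set.not_nonempty_iff_eq_empty] at hC
            apply Set.eq_empty_of_subset_empty
            rw [← hC]
            exact fun z hz => ⟨hz.1, hz.2.1⟩
          rw [hempty]
          simp)
    -- recursive call 2 : A minus C
    set A₂ : Set B := A \ C with hA₂def
    have hA₂N : A₂.ncard ≤ N := by
      have hss : A₂ ⊂ A := by
        rw [Set.ssubset_iff_of_subset Set.diff_subset]
        exact ⟨x₀, hx₀, fun h => h.2 hx₀C⟩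
      have := Set.ncard_lt_ncard hss (Set.toFinite A)
      omega
    obtain ⟨c₂, a₂, b₂, hab₂, spec₂⟩ := ih k A₂ n (fun i => X i ∩ A₂) hA₂N
      (fun i => Set.inter_subset_right)
      (fun i hi => by show X i ∩ A₂ = ∅; rw [hbnd i hi]; simp)
      (fun t ht => by obtain ⟨i, hi⟩ := hcov t ht.1; exact ⟨i, hi, ht⟩)
      (fun t i j m h1 h2 hm1 hm2 => ⟨hint t i j m h1.1 h2.1 hm1 hm2, h1.2⟩)
      (fun s t hs ht hadj => by
        obtain ⟨i, h1, h2⟩ := hedge s t hs.1 ht.1 hadj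
        exact ⟨i, ⟨h1, hs⟩, ⟨h2, ht⟩⟩)
      (fun i => by
        show (X i ∩ A₂).ncard ≤ k + 1
        exact le_trans (Set.ncard_le_ncard Set.inter_subset_left (Set.toFinite _)) (hsize i))
    have conv : ∀ v : V, (S v ∩ Qs).Nonempty → ∃ z ∈ S v, z ∈ Q.support :=
      fun v ⟨z, h1, h2⟩ => ⟨z, h1, h2⟩
    have hSCQ : ∀ v, S v ⊆ A → (S v ∩ C).Nonempty → ¬ (S v ∩ Qs).Nonempty → S v ⊆ A₁ :=
      fun v hvA hvC hvQ z hz => ⟨hSC v hvA hvC hz, fun hq => hvQ ⟨z, hz, hq⟩⟩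
    have hSA₂ : ∀ v, S v ⊆ A → ¬ (S v ∩ C).Nonempty → S v ⊆ A₂ :=
      fun v hvA hvC z hz => ⟨hvA hz, fun hq => hvC ⟨z, hz, hq⟩⟩
    have hNOQ : k = 0 → ∀ v, S v ⊆ A → (S v ∩ C).Nonempty → (S v ∩ Qs).Nonempty := by
      intro hk v hvA hvC
      obtain ⟨t, ht⟩ := hSne v
      have htC : t ∈ C := hSC v hvA hvC ht
      obtain ⟨i, hti⟩ := hcov t (hCA htC)
      obtain ⟨t', ht'Q, ht'X⟩ := bag_meets_Q i ⟨t, hti, htC⟩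
      have hteq : t = t' := by
        have h1 := hsize i
        rw [hk] at h1
        exact (Set.ncard_le_one (Set.toFinite _)).1 h1 t hti t' ht'X
      exact ⟨t, ht, by rw [hQsdef]; rw [hteq]; exact ht'Q⟩
    set K : ℕ := 1 + Finset.univ.sup (fun v : V => max (sSup (idxSet Q (S v))) (b₁ v)) with hKdef
    have hKb : ∀ v : V, sSup (idxSet Q (S v)) < K ∧ b₁ v < K := by
      intro v
      have h := Finset.le_sup (f := fun v : V => max (sSup (idxSet Q (S v))) (b₁ v))
        (Finset.mem_univ v)
      have h1 := le_trans (le_max_left (sSup (idxSet Q (S v))) (b₁ v)) h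
      have h2 := le_trans (le_max_right (sSup (idxSet Q (S v))) (b₁ v)) h
      omega
    set emb : Fin (k-1+1) → Fin (k+1) :=
      fun j => if h : k = 0 then 0 else ⟨j.val+1, by have := j.isLt; omega⟩ with hembdef
    have hembne : k ≠ 0 → ∀ j, (0 : Fin (k+1)) ≠ emb j := by
      intro hk j
      rw [hembdef]
      simp only [dif_neg hk]
      intro heq
      have := congrArg Fin.val heq
      simp at this
    have hembinj : k ≠ 0 → ∀ j j', emb j = emb j' → j = j' := by
      intro hk j j' heq
      rw [hembdef] at heq
      simp only [dif_neg hk, Fin.mk.injEq, Nat.add_right_cancel_iff] at heq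
      exact Fin.ext heq
    refine ⟨fun v => if (S v ∩ C).Nonempty then
        (if (S v ∩ Qs).Nonempty then 0 else emb (c₁ v)) else c₂ v,
      fun v => if (S v ∩ C).Nonempty then
        (if (S v ∩ Qs).Nonempty then sInf (idxSet Q (S v)) else a₁ v) else a₂ v + K,
      fun v => if (S v ∩ C).Nonempty then
        (if (S v ∩ Qs).Nonempty then sSup (idxSet Q (S v)) else b₁ v) else b₂ v + K,
      ?_, ?_⟩
    · intro v hv
      beta_reduce
      by_cases hCv : (S v ∩ C).Nonempty
      · by_cases hQv : (S v ∩ Qs).Nonempty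
        · rw [if_pos hCv, if_pos hCv, if_pos hQv, if_pos hQv]
          exact idx_le (conv v hQv)
        · rw [if_pos hCv, if_pos hCv, if_neg hQv, if_neg hQv]
          exact hab₁ v (hSCQ v hv hCv hQv)
      · rw [if_neg hCv, if_neg hCv]
        have := hab₂ v (hSA₂ v hv hCv)
        omega
    · intro u v hu hv hc
      beta_reduce at hc ⊢
      by_cases hCu : (S u ∩ C).Nonempty <;> by_cases hCv : (S v ∩ C).Nonempty
      · -- both in C
        rw [if_pos hCu, if_pos hCv] at hc
        rw [if_pos hCu, if_pos hCv, if_pos hCu, if_pos hCv]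
        by_cases hQu : (S u ∩ Qs).Nonempty <;> by_cases hQv : (S v ∩ Qs).Nonempty
        · rw [if_pos hQu, if_pos hQv, if_pos hQu, if_pos hQv]
          exact class0_iff hT hQp (hSconn u) (hSconn v) (conv u hQu) (conv v hQv)
        · exfalso
          rw [if_pos hQu, if_neg hQv] at hc
          rcases Nat.eq_zero_or_pos k with hk | hk
          · exact hQv (hNOQ hk v hv hCv)
          · exact hembne (by omega) (c₁ v) hc
        · exfalso
          rw [if_neg hQu, if_pos hQv] at hc
          rcases Nat.eq_zero_or_pos k with hk | hk
          · exact hQu (hNOQ hk u hu hCu)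
          · exact hembne (by omega) (c₁ u) hc.symm
        · rw [if_neg hQu, if_neg hQv] at hc ⊢
          rw [if_neg hQu, if_neg hQv]
          rcases Nat.eq_zero_or_pos k with hk | hk
          · exact absurd (hNOQ hk u hu hCu) hQu
          · exact spec₁ u v (hSCQ u hu hCu hQu) (hSCQ v hv hCv hQv)
              (hembinj (by omega) _ _ hc)
      · -- u in C, v not
        rw [if_pos hCu, if_neg hCv, if_pos hCu, if_neg hCv]
        apply iff_of_false
        · rintro ⟨z, hz1, hz2⟩
          exact hCv ⟨z, hz2, hSC u hu hCu hz1⟩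
        · rintro ⟨-, h2⟩
          by_cases hQu : (S u ∩ Qs).Nonempty
          · rw [if_pos hQu] at h2
            have := (hKb u).1
            omega
          · rw [if_neg hQu] at h2
            have := (hKb u).2
            omega
      · -- v in C, u not
        rw [if_neg hCu, if_pos hCv, if_neg hCu, if_pos hCv]
        apply iff_of_false
        · rintro ⟨z, hz1, hz2⟩
          exact hCu ⟨z, hz1, hSC v hv hCv hz2⟩
        · rintro ⟨h1, -⟩
          by_cases hQv : (S v ∩ Qs).Nonempty
          · rw [if_pos hQv] at h1
            have := (hKb v).1
            omega
          · rw [if_neg hQv] at h1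
            have := (hKb v).2
            omega
      · -- both outside C
        rw [if_neg hCu, if_neg hCv] at hc
        rw [if_neg hCu, if_neg hCv, if_neg hCu, if_neg hCv]
        rw [spec₂ u v (hSA₂ u hu hCu) (hSA₂ v hv hCv) hc]
        omega

lemma pg_ivt {n : ℕ} {x y : Fin n} (w : (pathGraph n).Walk x y) : ∀ (m : ℕ),
    ((x.val ≤ m ∧ m ≤ y.val) ∨ (y.val ≤ m ∧ m ≤ x.val)) → ∃ c ∈ w.support, c.val = m := by
  induction w with
  | @nil p => intro m hm; exact ⟨p, Walk.start_mem_support _, by omega⟩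
  | @cons p q r hadj rest ihw =>
    intro m hm
    by_cases hxm : p.val = m
    · exact ⟨p, Walk.start_mem_support _, hxm⟩
    · rw [pathGraph_adj] at hadj
      obtain ⟨c, hc, hcm⟩ := ihw m (by omega)
      exact ⟨c, by rw [Walk.support_cons]; exact List.mem_cons_of_mem _ hc, hcm⟩


lemma one_side {V B : Type} [Fintype V] [Fintype B] {T : SimpleGraph B} {β : B → Set V}
    {G : SimpleGraph V} (hrep : IsRepresentation G T β) {k : ℕ} (hpw : PathwidthLE T k) :
    ∃ (c : V → Fin (k+1)) (a b : V → ℕ),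
      (∀ v, a v ≤ b v) ∧
      ∀ u v : V, c u = c v → u ≠ v → (G.Adj u v ↔ (a u ≤ b v ∧ a v ≤ b u)) := by
  classical
  obtain ⟨B', hB', P, β', ⟨n, ⟨e⟩⟩, hdec, hsizebags⟩ := hpw
  have hT : T.IsTree := hrep.isTree
  set S : V → Set B := fun v => {t | v ∈ β t} with hSdef
  have hSne : ∀ v, (S v).Nonempty := by
    intro v
    have := (hrep.support_connected v).nonempty
    exact Set.nonempty_coe_sort.mp this
  have hSconn : ∀ v, Conn T (S v) :=
    fun v => conn_of_induce_connected (hrep.support_connected v)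
  set X : ℕ → Set B := fun i => if h : i < n then β' (e.symm ⟨i, h⟩) else ∅ with hXdef
  have hXidx : ∀ (b' : B'), (e b' : Fin n) = ⟨(e b').val, (e b').isLt⟩ := fun b' => rfl
  have hXval : ∀ (b' : B'), X (e b').val = β' b' := by
    intro b'
    simp only [hXdef]
    rw [dif_pos (e b').isLt]
    congr 1
    rw [← hXidx b', RelIso.symm_apply_apply]
  obtain ⟨c, a, b, hab, spec⟩ := main hT S hSne hSconn (Fintype.card B) k Set.univ n X
    (by rw [Set.ncard_univ, Nat.card_eq_fintype_card])
    (fun i => Set.subset_univ _)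
    (fun i hi => by simp only [hXdef]; rw [dif_neg (by omega : ¬ i < n)])
    (by
      intro t _
      obtain ⟨b', hb'⟩ := hdec.exists_bag t
      exact ⟨(e b').val, by rw [hXval b']; exact hb'⟩)
    (by
      intro t i j m hti htj him hmj
      simp only [hXdef] at hti htj ⊢
      by_cases hi : i < n
      · by_cases hj : j < n
        · have hm : m < n := by omega
          rw [dif_pos hi] at hti
          rw [dif_pos hj] at htj
          rw [dif_pos hm]
          have hFe : ∀ q, e.toHom q = e q := fun _ => rfl
          have hconn := conn_of_induce_connected (hdec.support_connected t)
          obtain ⟨w, hw⟩ := hconn (e.symm ⟨i, hi⟩) hti (e.symm ⟨j, hj⟩) htj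
          obtain ⟨cv, hcv, hcvm⟩ := pg_ivt (w.map e.toHom) m
            (by simp only [hFe, RelIso.apply_symm_apply]; omega)
          rw [Walk.support_map] at hcv
          obtain ⟨p, hp, rfl⟩ := List.mem_map.1 hcv
          rw [hFe] at hcvm
          have : e.symm ⟨m, hm⟩ = p := by
            apply_fun e
            rw [RelIso.apply_symm_apply]
            exact Fin.ext hcvm.symm
          rw [this]
          exact hw p hp
        · rw [dif_neg hj] at htj
          exact absurd htj (Set.notMem_empty t)
      · rw [dif_neg hi] at hti
        exact absurd hti (Set.notMem_empty t)
      )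
    (by
      intro s t _ _ hadj
      obtain ⟨b', h1, h2⟩ := hdec.adj_bag hadj
      exact ⟨(e b').val, by rw [hXval b']; exact h1, by rw [hXval b']; exact h2⟩)
    (by
      intro i
      simp only [hXdef]
      by_cases hi : i < n
      · rw [dif_pos hi]; exact hsizebags _
      · rw [dif_neg hi]; simp)
  refine ⟨c, a, b, fun v => hab v (Set.subset_univ _), ?_⟩
  intro u v hc hne
  rw [hrep.adj_iff u v hne]
  exact spec u v (Set.subset_univ _) (Set.subset_univ _) hc


/-- the interval graph on a part -/
def partGraph {V : Type} (S : Set V) (a b : V → ℕ) : SimpleGraph S where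
  Adj u v := (u : V) ≠ (v : V) ∧ (a u ≤ b v ∧ a v ≤ b u)
  symm := by constructor; rintro u v ⟨h1, h2, h3⟩; exact ⟨h1.symm, h3, h2⟩
  loopless := by constructor; rintro u ⟨h1, -⟩; exact h1 rfl

lemma partGraph_interval {V : Type} (S : Set V) (a b : V → ℕ) (hab : ∀ v, a v ≤ b v) :
    IntervalGraph (partGraph S a b) := by
  refine ⟨fun v => Set.Icc (a ↑v : ℝ) (b ↑v), fun v => ⟨a ↑v, b ↑v, by exact_mod_cast hab ↑v, rfl⟩,
    ?_⟩
  intro u v hne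
  rw [Set.Icc_inter_Icc, Set.nonempty_Icc, ← Nat.cast_max, ← Nat.cast_min, Nat.cast_le]
  constructor
  · rintro ⟨-, h1, h2⟩
    have h3 := hab ↑u
    have h4 := hab ↑v
    omega
  · intro h
    have h3 := hab ↑u
    have h4 := hab ↑v
    exact ⟨fun hval => hne (Subtype.ext hval), by omega, by omega⟩


end Stmt15Aux

/-- If `G₁, G₂` are chordal graphs with representation trees of path-width at
most `k₁, k₂` respectively and `G = G₁ ∩ G₂`, then `V(G)` can be partitioned into at most
`(k₁+1)(k₂+1)` parts, each of which induces a graph of boxicity at most two. -/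
theorem stmt_15 {V : Type} [Fintype V] (k₁ k₂ : ℕ) (hk₁ : 0 < k₁) (hk₂ : 0 < k₂)
    (G₁ G₂ : SimpleGraph V) (hc₁ : Chordal G₁) (hc₂ : Chordal G₂)
    (hrep₁ : ∃ (B₁ : Type) (_ : Fintype B₁) (T₁ : SimpleGraph B₁) (β₁ : B₁ → Set V),
      IsRepresentation G₁ T₁ β₁ ∧ PathwidthLE T₁ k₁)
    (hrep₂ : ∃ (B₂ : Type) (_ : Fintype B₂) (T₂ : SimpleGraph B₂) (β₂ : B₂ → Set V),
      IsRepresentation G₂ T₂ β₂ ∧ PathwidthLE T₂ k₂)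
    (G : SimpleGraph V) (hG : G = G₁ ⊓ G₂) :
    ∃ P : Finset (Set V), (∀ v : V, ∃! S, S ∈ P ∧ v ∈ S) ∧
      P.card ≤ (k₁ + 1) * (k₂ + 1) ∧
      ∀ S ∈ P, ∃ I₁ I₂ : SimpleGraph S, IntervalGraph I₁ ∧ IntervalGraph I₂ ∧
        ∀ u v : S, (G.induce S).Adj u v ↔ (I₁.Adj u v ∧ I₂.Adj u v) := by
  classical
  obtain ⟨B₁, _, T₁, β₁, hr₁, hpw₁⟩ := hrep₁
  obtain ⟨B₂, _, T₂, β₂, hr₂, hpw₂⟩ := hrep₂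
  obtain ⟨c₁, a₁, b₁, hab₁, hiff₁⟩ := Stmt15Aux.one_side hr₁ hpw₁
  obtain ⟨c₂, a₂, b₂, hab₂, hiff₂⟩ := Stmt15Aux.one_side hr₂ hpw₂
  set cp : V → Fin (k₁+1) × Fin (k₂+1) := fun v => (c₁ v, c₂ v) with hcpdef
  refine ⟨Finset.image (fun p => {v | cp v = p}) Finset.univ, ?_, ?_, ?_⟩
  · intro v
    refine ⟨{w | cp w = cp v}, ⟨Finset.mem_image_of_mem _ (Finset.mem_univ (cp v)), rfl⟩, ?_⟩
    rintro S' ⟨hS'P, hvS'⟩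
    obtain ⟨p, -, rfl⟩ := Finset.mem_image.1 hS'P
    have : cp v = p := hvS'
    rw [← this]
  · calc (Finset.image (fun p => {v | cp v = p}) Finset.univ).card
        ≤ (Finset.univ : Finset (Fin (k₁+1) × Fin (k₂+1))).card := Finset.card_image_le
      _ = (k₁ + 1) * (k₂ + 1) := by
          rw [Finset.card_univ, Fintype.card_prod, Fintype.card_fin, Fintype.card_fin]
  · intro S hS
    obtain ⟨p, -, rfl⟩ := Finset.mem_image.1 hS
    refine ⟨Stmt15Aux.partGraph _ a₁ b₁, Stmt15Aux.partGraph _ a₂ b₂,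
      Stmt15Aux.partGraph_interval _ a₁ b₁ hab₁, Stmt15Aux.partGraph_interval _ a₂ b₂ hab₂, ?_⟩
    intro u v
    rcases eq_or_ne u v with rfl | hne
    · constructor
      · intro h
        exact absurd h (SimpleGraph.irrefl _)
      · rintro ⟨h, -⟩
        exact absurd h (SimpleGraph.irrefl _)
    · have hvne : (u : V) ≠ (v : V) := fun h => hne (Subtype.ext h)
      have hcu : cp ↑u = p := u.property
      have hcv : cp ↑v = p := v.property
      have hc₁ : c₁ ↑u = c₁ ↑v := by
        have := congrArg Prod.fst hcu
        have h2 := congrArg Prod.fst hcv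
        simp only [hcpdef] at this h2
        rw [this, h2]
      have hc₂ : c₂ ↑u = c₂ ↑v := by
        have := congrArg Prod.snd hcu
        have h2 := congrArg Prod.snd hcv
        simp only [hcpdef] at this h2
        rw [this, h2]
      have hGadj : (G.induce _).Adj u v ↔ (G₁.Adj ↑u ↑v ∧ G₂.Adj ↑u ↑v) := by
        rw [hG]
        exact Iff.rfl
      rw [hGadj, hiff₁ ↑u ↑v hc₁ hvne, hiff₂ ↑u ↑v hc₂ hvne]
      constructor
      · rintro ⟨h1, h2⟩
        exact ⟨⟨hvne, h1⟩, ⟨hvne, h2⟩⟩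
      · rintro ⟨⟨-, h1⟩, ⟨-, h2⟩⟩
        exact ⟨h1, h2⟩
end
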